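/- arXiv:1901.01476 — 4 statements merged into one kernel-verified Lean document; each statement's English description precedes it below -/
import Mathlib

section
/- Every Θ6-graph on a set P of n ≥ 3 points in the plane in general position has at most 5n − 12 edges. -/
noncomputable section

/-- Points in the plane. -/
abbrev Pt : Type := ℝ × ℝ

/-- `P` is in general position: no line through two points of `P` makes an angle of
0°, 60°, or 120° with the horizontal. -/
def GenPos (P : Finset Pt) : Prop :=
  ∀ p ∈ P, ∀ q ∈ P, p ≠ q →
    p.2 ≠ q.2 ∧
    q.2 - p.2 ≠ Real.sqrt 3 * (q.1 - p.1) ∧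
    q.2 - p.2 ≠ -Real.sqrt 3 * (q.1 - p.1)

/-- First cone coordinate (height). -/
def cA (z : Pt) : ℝ := z.2
/-- Second cone coordinate. -/
def cB (z : Pt) : ℝ := Real.sqrt 3 * z.1 + z.2
/-- Third cone coordinate. -/
def cC (z : Pt) : ℝ := -Real.sqrt 3 * z.1 + z.2

/-- The smallest upward equilateral triangle (horizontal bottom side) having both
`p` and `q` on its boundary, as a closed set. -/
def upTri (p q : Pt) : Set Pt :=
  {x | min (cA p) (cA q) ≤ cA x ∧ cB x ≤ max (cB p) (cB q) ∧ cC x ≤ max (cC p) (cC q)}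

/-- The interior of `upTri p q`. -/
def upTriInt (p q : Pt) : Set Pt :=
  {x | min (cA p) (cA q) < cA x ∧ cB x < max (cB p) (cB q) ∧ cC x < max (cC p) (cC q)}

/-- The smallest downward equilateral triangle (horizontal top side) having both
`p` and `q` on its boundary, as a closed set. -/
def downTri (p q : Pt) : Set Pt :=
  {x | cA x ≤ max (cA p) (cA q) ∧ min (cB p) (cB q) ≤ cB x ∧ min (cC p) (cC q) ≤ cC x}

/-- The interior of `downTri p q`. -/
def downTriInt (p q : Pt) : Set Pt :=
  {x | cA x < max (cA p) (cA q) ∧ min (cB p) (cB q) < cB x ∧ min (cC p) (cC q) < cC x}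

lemma upTriInt_comm (p q : Pt) : upTriInt p q = upTriInt q p := by
  ext x
  simp only [upTriInt, Set.mem_setOf_eq]
  rw [min_comm (cA p) (cA q), max_comm (cB p) (cB q), max_comm (cC p) (cC q)]

lemma downTriInt_comm (p q : Pt) : downTriInt p q = downTriInt q p := by
  ext x
  simp only [downTriInt, Set.mem_setOf_eq]
  rw [max_comm (cA p) (cA q), min_comm (cB p) (cB q), min_comm (cC p) (cC q)]

/-- `upTri p q` is empty with respect to `P`: its interior contains no point of `P`. -/
def EmptyUp (P : Finset Pt) (p q : Pt) : Prop := ∀ r ∈ P, r ∉ upTriInt p q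

/-- `downTri p q` is empty with respect to `P`: its interior contains no point of `P`. -/
def EmptyDown (P : Finset Pt) (p q : Pt) : Prop := ∀ r ∈ P, r ∉ downTriInt p q

/-- The Θ₆-graph `G⋆(P)`: vertices are the points of `P`, and `p` is adjacent to `q`
iff `△(p,q)` or `▽(p,q)` is empty with respect to `P`. -/
def theta6 (P : Finset Pt) : SimpleGraph {x // x ∈ P} where
  Adj p q := p ≠ q ∧ (EmptyUp P p.1 q.1 ∨ EmptyDown P p.1 q.1)
  symm := by
    constructor
    rintro p q ⟨hne, h⟩
    refine ⟨hne.symm, ?_⟩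
    unfold EmptyUp EmptyDown at h ⊢
    rcases h with h | h
    · exact Or.inl (by rw [upTriInt_comm]; exact h)
    · exact Or.inr (by rw [downTriInt_comm]; exact h)
  loopless := ⟨fun p h => h.1 rfl⟩

/-- `B` blocks `G⋆(P)`: every empty triangle introducing an edge of `G⋆(P)` contains a
point of `B` in its interior. -/
def Blocks (P B : Finset Pt) : Prop :=
  ∀ p ∈ P, ∀ q ∈ P, p ≠ q →
    (EmptyUp P p q → ∃ b ∈ B, b ∈ upTriInt p q) ∧
    (EmptyDown P p q → ∃ b ∈ B, b ∈ downTriInt p q)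

/-- `betaMin n`: the minimum, over sets `P` of `n` points in general position, of the
minimum size of a blocking set of `G⋆(P)`. -/
def betaMin (n : ℕ) : ℕ :=
  sInf {k | ∃ P B : Finset Pt, P.card = n ∧ GenPos P ∧ Blocks P B ∧ B.card = k}

/-- An (up or down) triangle described by two points and an orientation flag:
its interior. -/
def triIntr (t : Pt × Pt × Bool) : Set Pt :=
  if t.2.2 then upTriInt t.1 t.2.1 else downTriInt t.1 t.2.1

/-- An (up or down) triangle described by two points and an orientation flag:
the closed triangle. -/
def triCl (t : Pt × Pt × Bool) : Set Pt :=
  if t.2.2 then upTri t.1 t.2.1 else downTri t.1 t.2.1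

/-- `t` describes an empty triangle of `P` (one that introduces an edge of `G⋆(P)`). -/
def IsEmptyTriOf (P : Finset Pt) (t : Pt × Pt × Bool) : Prop :=
  t.1 ∈ P ∧ t.2.1 ∈ P ∧ t.1 ≠ t.2.1 ∧ ∀ r ∈ P, r ∉ triIntr t

namespace T6
open Finset

variable {P : Finset Pt} {p q r v w : Pt}

lemma bc_eq (z : Pt) : cB z + cC z = 2 * cA z := by
  simp only [cA, cB, cC]; ring

lemma gp_a (hGP : GenPos P) (hp : p ∈ P) (hq : q ∈ P) (hne : p ≠ q) : cA p ≠ cA q :=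
  (hGP p hp q hq hne).1

lemma gp_b (hGP : GenPos P) (hp : p ∈ P) (hq : q ∈ P) (hne : p ≠ q) : cB p ≠ cB q := by
  intro h
  exact (hGP p hp q hq hne).2.2 (by simp only [cB] at h; linarith [h])

lemma gp_c (hGP : GenPos P) (hp : p ∈ P) (hq : q ∈ P) (hne : p ≠ q) : cC p ≠ cC q := by
  intro h
  exact (hGP p hp q hq hne).2.1 (by simp only [cC] at h; linarith [h])

lemma gp_a_eq (hGP : GenPos P) (hr : r ∈ P) (hp : p ∈ P) (h : cA r = cA p) : r = p := by
  by_contra hne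
  exact gp_a hGP hr hp hne h

/-- The six cones around a point. 0=T, 1=UR, 2=UL, 3=B, 4=LR, 5=LL. -/
def Cone (k : ℕ) (v r : Pt) : Prop :=
  match k with
  | 0 => cB v < cB r ∧ cC v < cC r
  | 1 => cA v < cA r ∧ cC r < cC v
  | 2 => cA v < cA r ∧ cB r < cB v
  | 3 => cB r < cB v ∧ cC r < cC v
  | 4 => cA r < cA v ∧ cB v < cB r
  | 5 => cA r < cA v ∧ cC v < cC r
  | _ => False

/-- The functional maximized by the cone-neighbor. -/
def keyF (k : ℕ) (z : Pt) : ℝ :=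
  match k with
  | 0 => -cA z
  | 1 => -cB z
  | 2 => -cC z
  | 3 => cA z
  | 4 => cC z
  | 5 => cB z
  | _ => 0

/-- Slot `(v,k)` points to `w`. -/
def Points (P : Finset Pt) (v : Pt) (k : ℕ) (w : Pt) : Prop :=
  w ∈ P ∧ Cone k v w ∧ ∀ r ∈ P, Cone k v r → r ≠ w → keyF k r < keyF k w

lemma points_unique {k : ℕ} {w' : Pt} (h : Points P v k w) (h' : Points P v k w') :
    w = w' := by
  by_contra hne
  exact absurd (h.2.2 w' h'.1 h'.2.1 (Ne.symm hne)) 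
    (not_lt.2 (le_of_lt (h'.2.2 w h.1 h.2.1 hne)))

end T6
namespace T6
open Finset

variable {P : Finset Pt} {p q r v w : Pt}

lemma up_charge' (hGP : GenPos P) (hp : p ∈ P) (hq : q ∈ P) (hne : p ≠ q)
    (ha : cA p < cA q) (h : EmptyUp P p q) :
    ∃ v k w, (k = 1 ∨ k = 2 ∨ k = 3) ∧ v ∈ P ∧ Points P v k w ∧
      s(p, q) = s(v, w) := by
  have hb := gp_b hGP hp hq hne
  have hc := gp_c hGP hp hq hne
  have hmem : ∀ r ∈ P,
      ¬(cA p < cA r ∧ cB r < max (cB p) (cB q) ∧ cC r < max (cC p) (cC q)) := by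
    intro r hr hcon
    exact h r hr (by simpa [upTriInt, Set.mem_setOf_eq, min_eq_left ha.le] using hcon)
  rcases lt_or_gt_of_ne hb with hb' | hb'
  · rcases lt_or_gt_of_ne hc with hc' | hc'
    · -- T case: slot (q,3) → p
      refine ⟨q, 3, p, by tauto, hq, ⟨hp, ⟨hb', hc'⟩, ?_⟩, Sym2.eq_swap⟩
      intro r hr hcone hrp
      have hblock := hmem r hr
      rw [max_eq_right hb'.le, max_eq_right hc'.le] at hblock
      have haneq : cA r ≠ cA p := gp_a hGP hr hp hrp
      have h2 : ¬ (cA p < cA r) := fun hh => hblock ⟨hh, hcone.1, hcone.2⟩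
      show cA r < cA p
      exact lt_of_le_of_ne (not_lt.1 h2) haneq
    · -- UR case: slot (p,1) → q
      refine ⟨p, 1, q, by tauto, hp, ⟨hq, ⟨ha, hc'⟩, ?_⟩, rfl⟩
      intro r hr hcone hrq
      have hblock := hmem r hr
      rw [max_eq_right hb'.le, max_eq_left hc'.le] at hblock
      have hbneq : cB r ≠ cB q := gp_b hGP hr hq hrq
      have h2 : ¬ (cB r < cB q) := fun hh => hblock ⟨hcone.1, hh, hcone.2⟩
      show -cB r < -cB q
      have h3 : cB q < cB r := lt_of_le_of_ne (not_lt.1 h2) (Ne.symm hbneq)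
      linarith
  · rcases lt_or_gt_of_ne hc with hc' | hc'
    · -- UL case: slot (p,2) → q
      refine ⟨p, 2, q, by tauto, hp, ⟨hq, ⟨ha, hb'⟩, ?_⟩, rfl⟩
      intro r hr hcone hrq
      have hblock := hmem r hr
      rw [max_eq_left hb'.le, max_eq_right hc'.le] at hblock
      have hcneq : cC r ≠ cC q := gp_c hGP hr hq hrq
      have h2 : ¬ (cC r < cC q) := fun hh => hblock ⟨hcone.1, hcone.2, hh⟩
      show -cC r < -cC q
      have h3 : cC q < cC r := lt_of_le_of_ne (not_lt.1 h2) (Ne.symm hcneq)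
      linarith
    · exfalso
      have e1 := bc_eq p; have e2 := bc_eq q
      linarith

lemma down_charge' (hGP : GenPos P) (hp : p ∈ P) (hq : q ∈ P) (hne : p ≠ q)
    (ha : cA p < cA q) (h : EmptyDown P p q) :
    ∃ v k w, (k = 0 ∨ k = 4 ∨ k = 5) ∧ v ∈ P ∧ Points P v k w ∧
      s(p, q) = s(v, w) := by
  have hb := gp_b hGP hp hq hne
  have hc := gp_c hGP hp hq hne
  have hmem : ∀ r ∈ P,
      ¬(cA r < cA q ∧ min (cB p) (cB q) < cB r ∧ min (cC p) (cC q) < cC r) := by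
    intro r hr hcon
    exact h r hr (by simpa [downTriInt, Set.mem_setOf_eq, max_eq_right ha.le] using hcon)
  rcases lt_or_gt_of_ne hb with hb' | hb'
  · rcases lt_or_gt_of_ne hc with hc' | hc'
    · -- p in B(q), i.e. q in T(p): slot (p,0) → q, minimize cA
      refine ⟨p, 0, q, by tauto, hp, ⟨hq, ⟨hb', hc'⟩, ?_⟩, rfl⟩
      intro r hr hcone hrq
      have hblock := hmem r hr
      rw [min_eq_left hb'.le, min_eq_left hc'.le] at hblock
      have haneq : cA r ≠ cA q := gp_a hGP hr hq hrq
      have h2 : ¬ (cA r < cA q) := fun hh => hblock ⟨hh, hcone.1, hcone.2⟩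
      show -cA r < -cA q
      have h3 : cA q < cA r := lt_of_le_of_ne (not_lt.1 h2) (Ne.symm haneq)
      linarith
    · -- c_q < c_p, b_p < b_q : p is lower. p in LL(q)?? slot (q,4) → p : Cone 4 q p : cA p < cA q ∧ cB q < cB p? 
      refine ⟨q, 5, p, by tauto, hq, ⟨hp, ⟨ha, hc'⟩, ?_⟩, Sym2.eq_swap⟩
      intro r hr hcone hrp
      have hblock := hmem r hr
      rw [min_eq_left hb'.le, min_eq_right hc'.le] at hblock
      have hbneq : cB r ≠ cB p := gp_b hGP hr hp hrp
      have h2 : ¬ (cB p < cB r) := fun hh => hblock ⟨hcone.1, hh, hcone.2⟩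
      show cB r < cB p
      exact lt_of_le_of_ne (not_lt.1 h2) hbneq
  · rcases lt_or_gt_of_ne hc with hc' | hc'
    · -- b_q < b_p, c_p < c_q : p in LR(q): Cone 4 q p : cA p < cA q ∧ cB q < cB p ✓ maximize cC
      refine ⟨q, 4, p, by tauto, hq, ⟨hp, ⟨ha, hb'⟩, ?_⟩, Sym2.eq_swap⟩
      intro r hr hcone hrp
      have hblock := hmem r hr
      rw [min_eq_right hb'.le, min_eq_left hc'.le] at hblock
      have hcneq : cC r ≠ cC p := gp_c hGP hr hp hrp
      have h2 : ¬ (cC p < cC r) := fun hh => hblock ⟨hcone.1, hcone.2, hh⟩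
      show cC r < cC p
      exact lt_of_le_of_ne (not_lt.1 h2) hcneq
    · exfalso
      have e1 := bc_eq p; have e2 := bc_eq q
      linarith

lemma emptyUp_comm : EmptyUp P p q ↔ EmptyUp P q p := by
  unfold EmptyUp; rw [upTriInt_comm]

lemma emptyDown_comm : EmptyDown P p q ↔ EmptyDown P q p := by
  unfold EmptyDown; rw [downTriInt_comm]

lemma up_charge (hGP : GenPos P) (hp : p ∈ P) (hq : q ∈ P) (hne : p ≠ q)
    (h : EmptyUp P p q) :
    ∃ v k w, (k = 1 ∨ k = 2 ∨ k = 3) ∧ v ∈ P ∧ Points P v k w ∧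
      s(p, q) = s(v, w) := by
  rcases lt_or_gt_of_ne (gp_a hGP hp hq hne) with ha | ha
  · exact up_charge' hGP hp hq hne ha h
  · obtain ⟨v, k, w, h1, h2, h3, h4⟩ :=
      up_charge' hGP hq hp (Ne.symm hne) ha (emptyUp_comm.1 h)
    exact ⟨v, k, w, h1, h2, h3, by rw [Sym2.eq_swap]; exact h4⟩

lemma down_charge (hGP : GenPos P) (hp : p ∈ P) (hq : q ∈ P) (hne : p ≠ q)
    (h : EmptyDown P p q) :
    ∃ v k w, (k = 0 ∨ k = 4 ∨ k = 5) ∧ v ∈ P ∧ Points P v k w ∧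
      s(p, q) = s(v, w) := by
  rcases lt_or_gt_of_ne (gp_a hGP hp hq hne) with ha | ha
  · exact down_charge' hGP hp hq hne ha h
  · obtain ⟨v, k, w, h1, h2, h3, h4⟩ :=
      down_charge' hGP hq hp (Ne.symm hne) ha (emptyDown_comm.1 h)
    exact ⟨v, k, w, h1, h2, h3, by rw [Sym2.eq_swap]; exact h4⟩

end T6
namespace T6
open Finset

variable {P : Finset Pt} {p q r u v w : Pt}

/-- Hexagonal distance. -/
noncomputable def dd (p q : Pt) : ℝ :=
  max |2 * (cA p - cA q)| (max |cB p - cB q| |cC p - cC q|)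

lemma dd_comm (p q : Pt) : dd p q = dd q p := by
  unfold dd
  rw [abs_sub_comm (cB p), abs_sub_comm (cC p),
    show (2:ℝ) * (cA p - cA q) = -(2 * (cA q - cA p)) by ring, abs_neg]

lemma not_self_mem_upTriInt : p ∉ upTriInt p q := by
  intro h
  obtain ⟨h1, h2, h3⟩ := h
  rcases le_total (cA p) (cA q) with ha | ha
  · rw [min_eq_left ha] at h1; exact lt_irrefl _ h1
  · rw [min_eq_right ha] at h1
    rcases le_total (cB p) (cB q) with hb | hb
    · rcases le_total (cC p) (cC q) with hc | hc
      · have := bc_eq p; have := bc_eq q; linarith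
      · rw [max_eq_left hc] at h3; exact lt_irrefl _ h3
    · rw [max_eq_left hb] at h2; exact lt_irrefl _ h2

lemma not_self_mem_upTriInt' : q ∉ upTriInt p q := by
  rw [upTriInt_comm]; exact not_self_mem_upTriInt

lemma not_self_mem_downTriInt : p ∉ downTriInt p q := by
  intro h
  obtain ⟨h1, h2, h3⟩ := h
  rcases le_total (cA q) (cA p) with ha | ha
  · rw [max_eq_left ha] at h1; exact lt_irrefl _ h1
  · rw [max_eq_right ha] at h1
    rcases le_total (cB q) (cB p) with hb | hb
    · rcases le_total (cC q) (cC p) with hc | hc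
      · have := bc_eq p; have := bc_eq q; linarith
      · rw [min_eq_left hc] at h3; exact lt_irrefl _ h3
    · rw [min_eq_left hb] at h2; exact lt_irrefl _ h2

lemma not_self_mem_downTriInt' : q ∉ downTriInt p q := by
  rw [downTriInt_comm]; exact not_self_mem_downTriInt

lemma up_shrink (hu : u ∈ upTri p q) (hr : r ∈ upTriInt p q) :
    dd u r < max (cB p) (cB q) + max (cC p) (cC q) - 2 * min (cA p) (cA q) := by
  obtain ⟨hu1, hu2, hu3⟩ := hu
  obtain ⟨hr1, hr2, hr3⟩ := hr
  have eu := bc_eq u; have er := bc_eq r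
  have e1 := bc_eq p; have e2 := bc_eq q
  have hminle : 2 * min (cA p) (cA q) ≤ max (cB p) (cB q) + max (cC p) (cC q) := by
    rcases le_total (cA p) (cA q) with h | h
    · rw [min_eq_left h]
      have : cB p ≤ max (cB p) (cB q) := le_max_left _ _
      have : cC p ≤ max (cC p) (cC q) := le_max_left _ _
      linarith [le_max_left (cB p) (cB q), le_max_left (cC p) (cC q)]
    · rw [min_eq_right h]
      linarith [le_max_right (cB p) (cB q), le_max_right (cC p) (cC q)]
  unfold dd
  apply max_lt
  · rw [abs_lt]; constructor <;> nlinarith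
  · apply max_lt
    · rw [abs_lt]; constructor <;> nlinarith
    · rw [abs_lt]; constructor <;> nlinarith

lemma up_size (p q : Pt) :
    max (cB p) (cB q) + max (cC p) (cC q) - 2 * min (cA p) (cA q) ≤ dd p q := by
  have e1 := bc_eq p; have e2 := bc_eq q
  have d1 : 2 * (cA p - cA q) ≤ |2 * (cA p - cA q)| := le_abs_self _
  have d1' : -(2 * (cA p - cA q)) ≤ |2 * (cA p - cA q)| := neg_le_abs _
  have d2 : cB p - cB q ≤ |cB p - cB q| := le_abs_self _
  have d2' : -(cB p - cB q) ≤ |cB p - cB q| := neg_le_abs _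
  have d3 : cC p - cC q ≤ |cC p - cC q| := le_abs_self _
  have d3' : -(cC p - cC q) ≤ |cC p - cC q| := neg_le_abs _
  have m1 : |2 * (cA p - cA q)| ≤ dd p q := le_max_left _ _
  have m2 : |cB p - cB q| ≤ dd p q := le_trans (le_max_left _ _) (le_max_right _ _)
  have m3 : |cC p - cC q| ≤ dd p q := le_trans (le_max_right _ _) (le_max_right _ _)
  rcases le_total (cA p) (cA q) with ha | ha <;>
    rcases le_total (cB p) (cB q) with hb | hb <;>
      rcases le_total (cC p) (cC q) with hc | hc
  · rw [min_eq_left ha, max_eq_right hb, max_eq_right hc]; linarith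
  · rw [min_eq_left ha, max_eq_right hb, max_eq_left hc]; linarith
  · rw [min_eq_left ha, max_eq_left hb, max_eq_right hc]; linarith
  · rw [min_eq_left ha, max_eq_left hb, max_eq_left hc]
    linarith [abs_nonneg (2 * (cA p - cA q))]
  · rw [min_eq_right ha, max_eq_right hb, max_eq_right hc]
    linarith [abs_nonneg (2 * (cA p - cA q))]
  · rw [min_eq_right ha, max_eq_right hb, max_eq_left hc]; linarith
  · rw [min_eq_right ha, max_eq_left hb, max_eq_right hc]; linarith
  · rw [min_eq_right ha, max_eq_left hb, max_eq_left hc]; linarith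

end T6
namespace T6
open Finset

variable {P : Finset Pt} {p q r u v w : Pt}

lemma down_shrink (hu : u ∈ downTri p q) (hr : r ∈ downTriInt p q) :
    dd u r < 2 * max (cA p) (cA q) - min (cB p) (cB q) - min (cC p) (cC q) := by
  obtain ⟨hu1, hu2, hu3⟩ := hu
  obtain ⟨hr1, hr2, hr3⟩ := hr
  have eu := bc_eq u; have er := bc_eq r
  have e1 := bc_eq p; have e2 := bc_eq q
  have hminle : min (cB p) (cB q) + min (cC p) (cC q) ≤ 2 * max (cA p) (cA q) := by
    rcases le_total (cA p) (cA q) with h | h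
    · rw [max_eq_right h]
      linarith [min_le_right (cB p) (cB q), min_le_right (cC p) (cC q)]
    · rw [max_eq_left h]
      linarith [min_le_left (cB p) (cB q), min_le_left (cC p) (cC q)]
  unfold dd
  apply max_lt
  · rw [abs_lt]; constructor <;> nlinarith
  · apply max_lt
    · rw [abs_lt]; constructor <;> nlinarith
    · rw [abs_lt]; constructor <;> nlinarith

lemma down_size (p q : Pt) :
    2 * max (cA p) (cA q) - min (cB p) (cB q) - min (cC p) (cC q) ≤ dd p q := by
  have e1 := bc_eq p; have e2 := bc_eq q
  have d1 : 2 * (cA p - cA q) ≤ |2 * (cA p - cA q)| := le_abs_self _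
  have d1' : -(2 * (cA p - cA q)) ≤ |2 * (cA p - cA q)| := neg_le_abs _
  have d2 : cB p - cB q ≤ |cB p - cB q| := le_abs_self _
  have d2' : -(cB p - cB q) ≤ |cB p - cB q| := neg_le_abs _
  have d3 : cC p - cC q ≤ |cC p - cC q| := le_abs_self _
  have d3' : -(cC p - cC q) ≤ |cC p - cC q| := neg_le_abs _
  have m1 : |2 * (cA p - cA q)| ≤ dd p q := le_max_left _ _
  have m2 : |cB p - cB q| ≤ dd p q := le_trans (le_max_left _ _) (le_max_right _ _)
  have m3 : |cC p - cC q| ≤ dd p q := le_trans (le_max_right _ _) (le_max_right _ _)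
  rcases le_total (cA p) (cA q) with ha | ha <;>
    rcases le_total (cB p) (cB q) with hb | hb <;>
      rcases le_total (cC p) (cC q) with hc | hc
  · rw [max_eq_right ha, min_eq_left hb, min_eq_left hc]
    linarith [abs_nonneg (2 * (cA p - cA q))]
  · rw [max_eq_right ha, min_eq_left hb, min_eq_right hc]; linarith
  · rw [max_eq_right ha, min_eq_right hb, min_eq_left hc]; linarith
  · rw [max_eq_right ha, min_eq_right hb, min_eq_right hc]; linarith
  · rw [max_eq_left ha, min_eq_left hb, min_eq_left hc]; linarith
  · rw [max_eq_left ha, min_eq_left hb, min_eq_right hc]; linarith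
  · rw [max_eq_left ha, min_eq_right hb, min_eq_left hc]; linarith
  · rw [max_eq_left ha, min_eq_right hb, min_eq_right hc]
    linarith [abs_nonneg (2 * (cA p - cA q))]

lemma self_mem_upTri : p ∈ upTri p q :=
  ⟨min_le_left _ _, le_max_left _ _, le_max_left _ _⟩

lemma self_mem_upTri' : q ∈ upTri p q :=
  ⟨min_le_right _ _, le_max_right _ _, le_max_right _ _⟩

lemma self_mem_downTri : p ∈ downTri p q :=
  ⟨le_max_left _ _, min_le_left _ _, min_le_left _ _⟩

lemma self_mem_downTri' : q ∈ downTri p q :=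
  ⟨le_max_right _ _, min_le_right _ _, min_le_right _ _⟩

lemma up_both_lt (hr : r ∈ upTriInt p q) :
    dd p r < dd p q ∧ dd r q < dd p q := by
  constructor
  · exact lt_of_lt_of_le (up_shrink self_mem_upTri hr) (up_size p q)
  · rw [dd_comm]
    exact lt_of_lt_of_le (up_shrink self_mem_upTri' hr) (up_size p q)

lemma down_both_lt (hr : r ∈ downTriInt p q) :
    dd p r < dd p q ∧ dd r q < dd p q := by
  constructor
  · exact lt_of_lt_of_le (down_shrink self_mem_downTri hr) (down_size p q)
  · rw [dd_comm]
    exact lt_of_lt_of_le (down_shrink self_mem_downTri' hr) (down_size p q)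

end T6
namespace T6
open Finset SimpleGraph

variable {P : Finset Pt} {p q r u v w : Pt}

/-- The "doubles" graph: both triangles empty. -/
def Gd (P : Finset Pt) : SimpleGraph {x // x ∈ P} where
  Adj x y := x ≠ y ∧ EmptyUp P x.1 y.1 ∧ EmptyDown P x.1 y.1
  symm := by
    constructor
    rintro x y ⟨hne, h1, h2⟩
    exact ⟨hne.symm, emptyUp_comm.1 h1, emptyDown_comm.1 h2⟩
  loopless := ⟨fun x h => h.1 rfl⟩

open scoped Classical in
noncomputable def meas (P : Finset Pt) (x y : Pt) : ℕ :=
  ((P ×ˢ P).filter fun z => dd z.1 z.2 < dd x y).card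

lemma meas_lt {x y x' y' : Pt} (hx : x' ∈ P) (hz : y' ∈ P) (h : dd x' y' < dd x y) :
    meas P x' y' < meas P x y := by
  classical
  unfold meas
  apply Finset.card_lt_card
  rw [Finset.ssubset_iff_of_subset]
  · exact ⟨(x', y'), by simp [Finset.mem_filter, Finset.mem_product, hx, hz, h]⟩
  · intro a ha
    rw [Finset.mem_filter] at ha ⊢
    exact ⟨ha.1, lt_trans ha.2 h⟩

lemma gd_reach_aux : ∀ k : ℕ, ∀ x y : {z // z ∈ P},
    meas P x.1 y.1 ≤ k → (Gd P).Reachable x y := by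
  intro k
  induction k using Nat.strong_induction_on with
  | _ k ih =>
    intro x y hk
    by_cases hxy : x = y
    · subst hxy; exact Reachable.refl x
    by_cases hadj : (Gd P).Adj x y
    · exact hadj.reachable
    have hor : (¬ EmptyUp P x.1 y.1) ∨ (¬ EmptyDown P x.1 y.1) := by
      by_contra hcon
      push_neg at hcon
      exact hadj ⟨hxy, hcon.1, hcon.2⟩
    have hr : ∃ z ∈ P, dd x.1 z < dd x.1 y.1 ∧ dd z y.1 < dd x.1 y.1 ∧
        z ≠ x.1 ∧ z ≠ y.1 := by
      rcases hor with h | h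
      · simp only [EmptyUp, not_forall] at h
        obtain ⟨z, hzP, hz⟩ := h
        rw [not_not] at hz
        obtain ⟨h1, h2⟩ := up_both_lt hz
        exact ⟨z, hzP, h1, h2, fun e => (e ▸ not_self_mem_upTriInt : ¬ _) hz,
          fun e => (e ▸ not_self_mem_upTriInt' : ¬ _) hz⟩
      · simp only [EmptyDown, not_forall] at h
        obtain ⟨z, hzP, hz⟩ := h
        rw [not_not] at hz
        obtain ⟨h1, h2⟩ := down_both_lt hz
        exact ⟨z, hzP, h1, h2, fun e => (e ▸ not_self_mem_downTriInt : ¬ _) hz,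
          fun e => (e ▸ not_self_mem_downTriInt' : ¬ _) hz⟩
    obtain ⟨z, hzP, h1, h2, hzx, hzy⟩ := hr
    have hm1 : meas P x.1 z < meas P x.1 y.1 := meas_lt x.2 hzP h1
    have hm2 : meas P z y.1 < meas P x.1 y.1 := meas_lt hzP y.2 h2
    have r1 : (Gd P).Reachable x ⟨z, hzP⟩ :=
      ih _ (lt_of_lt_of_le hm1 hk) x ⟨z, hzP⟩ le_rfl
    have r2 : (Gd P).Reachable ⟨z, hzP⟩ y :=
      ih _ (lt_of_lt_of_le hm2 hk) ⟨z, hzP⟩ y le_rfl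
    exact r1.trans r2

end T6
namespace T6
open Finset SimpleGraph

variable {P : Finset Pt} {p q r u v w : Pt}

def GoodUp (P : Finset Pt) (e : Sym2 Pt) : Prop :=
  ∃ p q, p ∈ P ∧ q ∈ P ∧ p ≠ q ∧ EmptyUp P p q ∧ e = s(p, q)

def GoodDown (P : Finset Pt) (e : Sym2 Pt) : Prop :=
  ∃ p q, p ∈ P ∧ q ∈ P ∧ p ≠ q ∧ EmptyDown P p q ∧ e = s(p, q)

open scoped Classical in
/-- The edges of the θ₆ graph, as a finset of `Sym2 Pt`. -/
noncomputable def EF (P : Finset Pt) : Finset (Sym2 Pt) :=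
  P.sym2.filter fun e => GoodUp P e ∨ GoodDown P e

open scoped Classical in
/-- The doubly-empty pairs, as a finset of `Sym2 Pt`. -/
noncomputable def DF (P : Finset Pt) : Finset (Sym2 Pt) :=
  P.sym2.filter fun e => GoodUp P e ∧ GoodDown P e

lemma gd_connected (hne : P.Nonempty) : (Gd P).Connected := by
  have : Nonempty {z // z ∈ P} := ⟨⟨hne.choose, hne.choose_spec⟩⟩
  exact ⟨fun x y => gd_reach_aux (meas P x.1 y.1) x y le_rfl⟩

lemma DF_card_ge (hne : P.Nonempty) : P.card - 1 ≤ (DF P).card := by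
  classical
  have hconn := gd_connected hne
  have hnonempty : Nonempty {z // z ∈ P} := ⟨⟨hne.choose, hne.choose_spec⟩⟩
  set G := Gd P
  obtain ⟨root⟩ := hnonempty
  have key : ∀ v : {z // z ∈ P}, v ≠ root →
      ∃ u, G.Adj v u ∧ G.dist root u < G.dist root v := by
    intro v hv
    obtain ⟨pw, hpw⟩ := (hconn root v).exists_walk_length_eq_dist
    have hpos : 0 < G.dist root v := hconn.pos_dist_of_ne (Ne.symm hv)
    obtain ⟨p', hp'⟩ : ∃ p' : G.Walk v root, p'.length = G.dist root v :=
      ⟨pw.reverse, by rw [SimpleGraph.Walk.length_reverse]; exact hpw⟩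
    cases p' with
    | nil => exact absurd rfl hv
    | cons h q =>
      refine ⟨_, h, ?_⟩
      simp only [SimpleGraph.Walk.length_cons] at hp'
      calc G.dist root _ ≤ q.reverse.length := SimpleGraph.dist_le _
        _ = q.length := SimpleGraph.Walk.length_reverse q
        _ < G.dist root v := by omega
  let F : {z // z ∈ P} → Sym2 Pt := fun v =>
    if h : v ≠ root then s(v.1, (key v h).choose.1) else s(v.1, v.1)
  have hFmem : ∀ v (h : v ≠ root), F v ∈ DF P := by
    intro v h
    obtain ⟨hadj, -⟩ := (key v h).choose_spec
    obtain ⟨hne', hu, hd⟩ := hadj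
    have hvne : v.1 ≠ (key v h).choose.1 := fun e => hne' (Subtype.ext e)
    simp only [F, dif_pos h, DF, Finset.mem_filter, Finset.mk_mem_sym2_iff]
    exact ⟨⟨v.2, (key v h).choose.2⟩,
      ⟨v.1, _, v.2, (key v h).choose.2, hvne, hu, rfl⟩,
      ⟨v.1, _, v.2, (key v h).choose.2, hvne, hd, rfl⟩⟩
  have hinj : Set.InjOn F (Finset.univ.erase root) := by
    intro a ha b hb hab
    have haroot : a ≠ root := (Finset.mem_erase.1 ha).1
    have hbroot : b ≠ root := (Finset.mem_erase.1 hb).1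
    simp only [F, dif_pos haroot, dif_pos hbroot] at hab
    rw [Sym2.eq_iff] at hab
    rcases hab with ⟨h1, -⟩ | ⟨h1, h2⟩
    · exact Subtype.ext h1
    · exfalso
      have hda := ((key a haroot).choose_spec).2
      have hdb := ((key b hbroot).choose_spec).2
      have e1 : G.dist root a = G.dist root (key b hbroot).choose :=
        congrArg (G.dist root) (Subtype.ext h1)
      have e2 : G.dist root (key a haroot).choose = G.dist root b :=
        congrArg (G.dist root) (Subtype.ext h2)
      omega
  calc P.card - 1 = (Finset.univ.erase root).card := by
        rw [Finset.card_erase_of_mem (Finset.mem_univ _), Finset.card_univ,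
          Fintype.card_coe]
      _ = ((Finset.univ.erase root).image F).card :=
        (Finset.card_image_of_injOn hinj).symm
      _ ≤ (DF P).card := by
        apply Finset.card_le_card
        intro e he
        obtain ⟨v, hv, rfl⟩ := Finset.mem_image.1 he
        exact hFmem v (Finset.mem_erase.1 hv).1

end T6
namespace T6
open Finset

variable {P : Finset Pt} {p q r u v w : Pt}

lemma cone0_above (h : Cone 0 v r) : cA v < cA r := by
  obtain ⟨h1, h2⟩ := h; have := bc_eq v; have := bc_eq r; linarith

lemma cone1_above (h : Cone 1 v r) : cA v < cA r := h.1

lemma cone2_above (h : Cone 2 v r) : cA v < cA r := h.1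

lemma cone3_below (h : Cone 3 v r) : cA r < cA v := by
  obtain ⟨h1, h2⟩ := h; have := bc_eq v; have := bc_eq r; linarith

lemma cone4_below (h : Cone 4 v r) : cA r < cA v := h.1

lemma cone5_below (h : Cone 5 v r) : cA r < cA v := h.1

lemma cone01 (h : Cone 0 v r) (h' : Cone 1 v r) : False := by
  exact absurd h.2 (not_lt.2 h'.2.le)

lemma cone02 (h : Cone 0 v r) (h' : Cone 2 v r) : False := by
  exact absurd h.1 (not_lt.2 h'.2.le)

lemma cone12 (h : Cone 1 v r) (h' : Cone 2 v r) : False := by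
  obtain ⟨h1, h2⟩ := h; obtain ⟨h3, h4⟩ := h'
  have := bc_eq v; have := bc_eq r; linarith

lemma cone34 (h : Cone 3 v r) (h' : Cone 4 v r) : False := by
  exact absurd h.1 (not_lt.2 h'.2.le)

lemma cone35 (h : Cone 3 v r) (h' : Cone 5 v r) : False := by
  exact absurd h.2 (not_lt.2 h'.2.le)

lemma cone45 (h : Cone 4 v r) (h' : Cone 5 v r) : False := by
  obtain ⟨h1, h2⟩ := h; obtain ⟨h3, h4⟩ := h'
  have := bc_eq v; have := bc_eq r; linarith

lemma up_free3 (hcover : ∀ r ∈ P, ¬ (cA v < cA r)) :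
    (∀ r ∈ P, ¬ Cone 0 v r) ∧ (∀ r ∈ P, ¬ Cone 1 v r) ∧ (∀ r ∈ P, ¬ Cone 2 v r) :=
  ⟨fun r hr h => hcover r hr (cone0_above h),
   fun r hr h => hcover r hr (cone1_above h),
   fun r hr h => hcover r hr (cone2_above h)⟩

lemma down_free3 (hcover : ∀ r ∈ P, ¬ (cA r < cA v)) :
    (∀ r ∈ P, ¬ Cone 3 v r) ∧ (∀ r ∈ P, ¬ Cone 4 v r) ∧ (∀ r ∈ P, ¬ Cone 5 v r) :=
  ⟨fun r hr h => hcover r hr (cone3_below h),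
   fun r hr h => hcover r hr (cone4_below h),
   fun r hr h => hcover r hr (cone5_below h)⟩

lemma up_free2 (hcover : ∀ r ∈ P, cA v < cA r → r = u) :
    ∃ k1 k2, k1 < k2 ∧ k2 ≤ 2 ∧ (∀ r ∈ P, ¬ Cone k1 v r) ∧ (∀ r ∈ P, ¬ Cone k2 v r) := by
  by_cases h0 : ∀ r ∈ P, ¬ Cone 0 v r
  · by_cases h1 : ∀ r ∈ P, ¬ Cone 1 v r
    · exact ⟨0, 1, by omega, by omega, h0, h1⟩
    · by_cases h2 : ∀ r ∈ P, ¬ Cone 2 v r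
      · exact ⟨0, 2, by omega, by omega, h0, h2⟩
      · exfalso
        push_neg at h1 h2
        obtain ⟨r1, hr1P, hr1⟩ := h1
        obtain ⟨r2, hr2P, hr2⟩ := h2
        rw [hcover r1 hr1P (cone1_above hr1)] at hr1
        rw [hcover r2 hr2P (cone2_above hr2)] at hr2
        exact cone12 hr1 hr2
  · by_cases h1 : ∀ r ∈ P, ¬ Cone 1 v r
    · by_cases h2 : ∀ r ∈ P, ¬ Cone 2 v r
      · exact ⟨1, 2, by omega, by omega, h1, h2⟩
      · exfalso
        push_neg at h0 h2
        obtain ⟨r0, hr0P, hr0⟩ := h0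
        obtain ⟨r2, hr2P, hr2⟩ := h2
        rw [hcover r0 hr0P (cone0_above hr0)] at hr0
        rw [hcover r2 hr2P (cone2_above hr2)] at hr2
        exact cone02 hr0 hr2
    · exfalso
      push_neg at h0 h1
      obtain ⟨r0, hr0P, hr0⟩ := h0
      obtain ⟨r1, hr1P, hr1⟩ := h1
      rw [hcover r0 hr0P (cone0_above hr0)] at hr0
      rw [hcover r1 hr1P (cone1_above hr1)] at hr1
      exact cone01 hr0 hr1

lemma down_free2 (hcover : ∀ r ∈ P, cA r < cA v → r = u) :
    ∃ k1 k2, k1 < k2 ∧ 3 ≤ k1 ∧ k2 ≤ 5 ∧ (∀ r ∈ P, ¬ Cone k1 v r) ∧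
      (∀ r ∈ P, ¬ Cone k2 v r) := by
  by_cases h0 : ∀ r ∈ P, ¬ Cone 3 v r
  · by_cases h1 : ∀ r ∈ P, ¬ Cone 4 v r
    · exact ⟨3, 4, by omega, by omega, by omega, h0, h1⟩
    · by_cases h2 : ∀ r ∈ P, ¬ Cone 5 v r
      · exact ⟨3, 5, by omega, by omega, by omega, h0, h2⟩
      · exfalso
        push_neg at h1 h2
        obtain ⟨r1, hr1P, hr1⟩ := h1
        obtain ⟨r2, hr2P, hr2⟩ := h2
        rw [hcover r1 hr1P (cone4_below hr1)] at hr1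
        rw [hcover r2 hr2P (cone5_below hr2)] at hr2
        exact cone45 hr1 hr2
  · by_cases h1 : ∀ r ∈ P, ¬ Cone 4 v r
    · by_cases h2 : ∀ r ∈ P, ¬ Cone 5 v r
      · exact ⟨4, 5, by omega, by omega, by omega, h1, h2⟩
      · exfalso
        push_neg at h0 h2
        obtain ⟨r0, hr0P, hr0⟩ := h0
        obtain ⟨r2, hr2P, hr2⟩ := h2
        rw [hcover r0 hr0P (cone3_below hr0)] at hr0
        rw [hcover r2 hr2P (cone5_below hr2)] at hr2
        exact cone35 hr0 hr2
    · exfalso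
      push_neg at h0 h1
      obtain ⟨r0, hr0P, hr0⟩ := h0
      obtain ⟨r1, hr1P, hr1⟩ := h1
      rw [hcover r0 hr0P (cone3_below hr0)] at hr0
      rw [hcover r1 hr1P (cone4_below hr1)] at hr1
      exact cone34 hr0 hr1

lemma up_free1 {u1 u2 : Pt} (hcover : ∀ r ∈ P, cA v < cA r → r = u1 ∨ r = u2) :
    ∃ k, k ≤ 2 ∧ ∀ r ∈ P, ¬ Cone k v r := by
  by_contra h
  push_neg at h
  obtain ⟨r0, hr0P, hr0⟩ := h 0 (by omega)
  obtain ⟨r1, hr1P, hr1⟩ := h 1 (by omega)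
  obtain ⟨r2, hr2P, hr2⟩ := h 2 (by omega)
  have h01 : r0 ≠ r1 := fun e => cone01 hr0 (e ▸ hr1)
  have h02 : r0 ≠ r2 := fun e => cone02 hr0 (e ▸ hr2)
  have h12 : r1 ≠ r2 := fun e => cone12 hr1 (e ▸ hr2)
  have m0 := hcover r0 hr0P (cone0_above hr0)
  have m1 := hcover r1 hr1P (cone1_above hr1)
  have m2 := hcover r2 hr2P (cone2_above hr2)
  rcases m0 with rfl | rfl <;> rcases m1 with e1 | e1 <;> rcases m2 with e2 | e2 <;>
    simp_all

lemma down_free1 {u1 u2 : Pt} (hcover : ∀ r ∈ P, cA r < cA v → r = u1 ∨ r = u2) :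
    ∃ k, 3 ≤ k ∧ k ≤ 5 ∧ ∀ r ∈ P, ¬ Cone k v r := by
  by_contra h
  push_neg at h
  obtain ⟨r0, hr0P, hr0⟩ := h 3 (by omega) (by omega)
  obtain ⟨r1, hr1P, hr1⟩ := h 4 (by omega) (by omega)
  obtain ⟨r2, hr2P, hr2⟩ := h 5 (by omega) (by omega)
  have h01 : r0 ≠ r1 := fun e => cone34 hr0 (e ▸ hr1)
  have h02 : r0 ≠ r2 := fun e => cone35 hr0 (e ▸ hr2)
  have h12 : r1 ≠ r2 := fun e => cone45 hr1 (e ▸ hr2)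
  have m0 := hcover r0 hr0P (cone3_below hr0)
  have m1 := hcover r1 hr1P (cone4_below hr1)
  have m2 := hcover r2 hr2P (cone5_below hr2)
  rcases m0 with rfl | rfl <;> rcases m1 with e1 | e1 <;> rcases m2 with e2 | e2 <;>
    simp_all

lemma bmax_free (hbmax : ∀ r ∈ P, r ≠ w → cB r < cB w) :
    (∀ r ∈ P, ¬ Cone 0 w r) ∧ (∀ r ∈ P, ¬ Cone 1 w r) ∧ (∀ r ∈ P, ¬ Cone 4 w r) := by
  refine ⟨fun r hr h => ?_, fun r hr h => ?_, fun r hr h => ?_⟩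
  · have hne : r ≠ w := fun e => absurd h.1 (by rw [e]; exact lt_irrefl _)
    exact absurd (hbmax r hr hne) (not_lt.2 h.1.le)
  · have hb : cB w < cB r := by
      have := bc_eq w; have := bc_eq r
      obtain ⟨h1, h2⟩ := h; linarith
    have hne : r ≠ w := fun e => absurd hb (by rw [e]; exact lt_irrefl _)
    exact absurd (hbmax r hr hne) (not_lt.2 hb.le)
  · have hne : r ≠ w := fun e => absurd h.2 (by rw [e]; exact lt_irrefl _)
    exact absurd (hbmax r hr hne) (not_lt.2 h.2.le)

end T6
namespace T6
open Finset

variable {P : Finset Pt} {p q r u v w : Pt}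

lemma top3 (hGP : GenPos P) (h6 : 6 ≤ P.card) :
    ∃ p1 p2 p3, p1 ∈ P ∧ p2 ∈ P ∧ p3 ∈ P ∧
      cA p3 < cA p2 ∧ cA p2 < cA p1 ∧
      (∀ r ∈ P, r ≠ p1 → cA r < cA p1) ∧
      (∀ r ∈ P, r ≠ p1 → r ≠ p2 → cA r < cA p2) ∧
      (∀ r ∈ P, r ≠ p1 → r ≠ p2 → r ≠ p3 → cA r < cA p3) := by
  have hne1 : P.Nonempty := Finset.card_pos.1 (by omega)
  obtain ⟨p1, hp1, hmax1⟩ := P.exists_max_image cA hne1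
  have hne2 : (P.erase p1).Nonempty := by
    rw [← Finset.card_pos, Finset.card_erase_of_mem hp1]; omega
  obtain ⟨p2, hp2', hmax2⟩ := (P.erase p1).exists_max_image cA hne2
  obtain ⟨hp2ne, hp2⟩ := Finset.mem_erase.1 hp2'
  have hne3 : ((P.erase p1).erase p2).Nonempty := by
    rw [← Finset.card_pos, Finset.card_erase_of_mem hp2',
      Finset.card_erase_of_mem hp1]; omega
  obtain ⟨p3, hp3', hmax3⟩ := ((P.erase p1).erase p2).exists_max_image cA hne3
  obtain ⟨hp3ne2, hp3''⟩ := Finset.mem_erase.1 hp3'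
  obtain ⟨hp3ne1, hp3⟩ := Finset.mem_erase.1 hp3''
  have key1 : ∀ r ∈ P, r ≠ p1 → cA r < cA p1 := fun r hr hne =>
    lt_of_le_of_ne (hmax1 r hr) (gp_a hGP hr hp1 hne)
  have key2 : ∀ r ∈ P, r ≠ p1 → r ≠ p2 → cA r < cA p2 := fun r hr h1 h2 =>
    lt_of_le_of_ne (hmax2 r (Finset.mem_erase.2 ⟨h1, hr⟩)) (gp_a hGP hr hp2 h2)
  have key3 : ∀ r ∈ P, r ≠ p1 → r ≠ p2 → r ≠ p3 → cA r < cA p3 := fun r hr h1 h2 h3 =>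
    lt_of_le_of_ne (hmax3 r (Finset.mem_erase.2 ⟨h2, Finset.mem_erase.2 ⟨h1, hr⟩⟩))
      (gp_a hGP hr hp3 h3)
  exact ⟨p1, p2, p3, hp1, hp2, hp3,
    key2 p3 hp3 hp3ne1 hp3ne2, key1 p2 hp2 hp2ne, key1, key2, key3⟩

lemma bot3 (hGP : GenPos P) (h6 : 6 ≤ P.card) :
    ∃ q1 q2 q3, q1 ∈ P ∧ q2 ∈ P ∧ q3 ∈ P ∧
      cA q2 < cA q3 ∧ cA q1 < cA q2 ∧
      (∀ r ∈ P, r ≠ q1 → cA q1 < cA r) ∧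
      (∀ r ∈ P, r ≠ q1 → r ≠ q2 → cA q2 < cA r) ∧
      (∀ r ∈ P, r ≠ q1 → r ≠ q2 → r ≠ q3 → cA q3 < cA r) := by
  have hne1 : P.Nonempty := Finset.card_pos.1 (by omega)
  obtain ⟨q1, hq1, hmin1⟩ := P.exists_min_image cA hne1
  have hne2 : (P.erase q1).Nonempty := by
    rw [← Finset.card_pos, Finset.card_erase_of_mem hq1]; omega
  obtain ⟨q2, hq2', hmin2⟩ := (P.erase q1).exists_min_image cA hne2
  obtain ⟨hq2ne, hq2⟩ := Finset.mem_erase.1 hq2'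
  have hne3 : ((P.erase q1).erase q2).Nonempty := by
    rw [← Finset.card_pos, Finset.card_erase_of_mem hq2',
      Finset.card_erase_of_mem hq1]; omega
  obtain ⟨q3, hq3', hmin3⟩ := ((P.erase q1).erase q2).exists_min_image cA hne3
  obtain ⟨hq3ne2, hq3''⟩ := Finset.mem_erase.1 hq3'
  obtain ⟨hq3ne1, hq3⟩ := Finset.mem_erase.1 hq3''
  have key1 : ∀ r ∈ P, r ≠ q1 → cA q1 < cA r := fun r hr hne =>
    lt_of_le_of_ne (hmin1 r hr) (gp_a hGP hq1 hr (Ne.symm hne))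
  have key2 : ∀ r ∈ P, r ≠ q1 → r ≠ q2 → cA q2 < cA r := fun r hr h1 h2 =>
    lt_of_le_of_ne (hmin2 r (Finset.mem_erase.2 ⟨h1, hr⟩)) (gp_a hGP hq2 hr (Ne.symm h2))
  have key3 : ∀ r ∈ P, r ≠ q1 → r ≠ q2 → r ≠ q3 → cA q3 < cA r := fun r hr h1 h2 h3 =>
    lt_of_le_of_ne (hmin3 r (Finset.mem_erase.2 ⟨h2, Finset.mem_erase.2 ⟨h1, hr⟩⟩))
      (gp_a hGP hq3 hr (Ne.symm h3))
  exact ⟨q1, q2, q3, hq1, hq2, hq3,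
    key2 q3 hq3 hq3ne1 hq3ne2, key1 q2 hq2 hq2ne, key1, key2, key3⟩

end T6
namespace T6
open Finset

variable {P : Finset Pt} {p q r u v w : Pt}

lemma prod_disj {x y : Pt} (hxy : x ≠ y) (s t : Finset ℕ) :
    Disjoint (({x} : Finset Pt) ×ˢ s) (({y} : Finset Pt) ×ˢ t) := by
  rw [Finset.disjoint_left]
  rintro ⟨a, b⟩ hm hm'
  rw [Finset.mem_product, Finset.mem_singleton] at hm hm'
  exact hxy (hm.1 ▸ hm'.1)

set_option maxHeartbeats 1000000 in
lemma thirteen (hGP : GenPos P) (h6 : 6 ≤ P.card) :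
    ∃ EC : Finset (Pt × ℕ), 13 ≤ EC.card ∧
      (∀ s ∈ EC, s.1 ∈ P ∧ s.2 < 6) ∧
      (∀ s ∈ EC, ∀ r ∈ P, ¬ Cone s.2 s.1 r) := by
  obtain ⟨p1, p2, p3, hp1, hp2, hp3, ha32, ha21, ht1, ht2, ht3⟩ := top3 hGP h6
  obtain ⟨q1, q2, q3, hq1, hq2, hq3, hb23, hb12, hbt1, hbt2, hbt3⟩ := bot3 hGP h6
  have hne1 : P.Nonempty := Finset.card_pos.1 (by omega)
  obtain ⟨w, hw, hwmax⟩ := P.exists_max_image cB hne1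
  have hwmax' : ∀ r ∈ P, r ≠ w → cB r < cB w := fun r hr hne =>
    lt_of_le_of_ne (hwmax r hr) (gp_b hGP hr hw hne)
  -- covers
  have hcover1 : ∀ r ∈ P, ¬ (cA p1 < cA r) := by
    intro r hr h
    rcases eq_or_ne r p1 with rfl | hne
    · exact lt_irrefl _ h
    · exact absurd h (not_lt.2 (ht1 r hr hne).le)
  have hcover2 : ∀ r ∈ P, cA p2 < cA r → r = p1 := by
    intro r hr h
    rcases eq_or_ne r p1 with rfl | hne1'
    · rfl
    rcases eq_or_ne r p2 with rfl | hne2'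
    · exact absurd h (lt_irrefl _)
    · exact absurd h (not_lt.2 (ht2 r hr hne1' hne2').le)
  have hcover3 : ∀ r ∈ P, cA p3 < cA r → r = p1 ∨ r = p2 := by
    intro r hr h
    rcases eq_or_ne r p1 with rfl | hne1'
    · exact Or.inl rfl
    rcases eq_or_ne r p2 with rfl | hne2'
    · exact Or.inr rfl
    rcases eq_or_ne r p3 with rfl | hne3'
    · exact absurd h (lt_irrefl _)
    · exact absurd h (not_lt.2 (ht3 r hr hne1' hne2' hne3').le)
  have hcovb1 : ∀ r ∈ P, ¬ (cA r < cA q1) := by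
    intro r hr h
    rcases eq_or_ne r q1 with rfl | hne
    · exact lt_irrefl _ h
    · exact absurd h (not_lt.2 (hbt1 r hr hne).le)
  have hcovb2 : ∀ r ∈ P, cA r < cA q2 → r = q1 := by
    intro r hr h
    rcases eq_or_ne r q1 with rfl | hne1'
    · rfl
    rcases eq_or_ne r q2 with rfl | hne2'
    · exact absurd h (lt_irrefl _)
    · exact absurd h (not_lt.2 (hbt2 r hr hne1' hne2').le)
  have hcovb3 : ∀ r ∈ P, cA r < cA q3 → r = q1 ∨ r = q2 := by
    intro r hr h
    rcases eq_or_ne r q1 with rfl | hne1'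
    · exact Or.inl rfl
    rcases eq_or_ne r q2 with rfl | hne2'
    · exact Or.inr rfl
    rcases eq_or_ne r q3 with rfl | hne3'
    · exact absurd h (lt_irrefl _)
    · exact absurd h (not_lt.2 (hbt3 r hr hne1' hne2' hne3').le)
  -- separation : cA q3 < cA p3
  have hsep : cA q3 < cA p3 := by
    by_contra hcon
    push_neg at hcon
    have hsub : P ⊆ ({p1, p2} : Finset Pt) ∪ ({q1, q2} : Finset Pt) ∪ {p3} := by
      intro r hr
      simp only [Finset.mem_union, Finset.mem_insert, Finset.mem_singleton]
      rcases lt_trichotomy (cA p3) (cA r) with h | h | h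
      · rcases hcover3 r hr h with h' | h'
        · exact Or.inl (Or.inl (Or.inl h'))
        · exact Or.inl (Or.inl (Or.inr h'))
      · right
        exact gp_a_eq hGP hr hp3 h.symm
      · have h2 : cA r < cA q3 := lt_of_lt_of_le h hcon
        rcases hcovb3 r hr h2 with h' | h'
        · exact Or.inl (Or.inr (Or.inl h'))
        · exact Or.inl (Or.inr (Or.inr h'))
    have hcard := Finset.card_le_card hsub
    have h5 : (({p1, p2} : Finset Pt) ∪ ({q1, q2} : Finset Pt) ∪ {p3}).card ≤ 5 := by
      apply le_trans (Finset.card_union_le _ _)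
      have := Finset.card_union_le ({p1, p2} : Finset Pt) ({q1, q2} : Finset Pt)
      have c1 : ({p1, p2} : Finset Pt).card ≤ 2 := Finset.card_insert_le _ _
      have c2 : ({q1, q2} : Finset Pt).card ≤ 2 := Finset.card_insert_le _ _
      simp only [Finset.card_singleton]
      omega
    omega
  -- point distinctness
  have hp21 : p2 ≠ p1 := fun e => absurd (e ▸ ha21) (lt_irrefl _)
  have hp31 : p3 ≠ p1 := fun e => absurd (e ▸ (ha32.trans ha21)) (lt_irrefl _)
  have hp32 : p3 ≠ p2 := fun e => absurd (e ▸ ha32) (lt_irrefl _)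
  have hq21 : q2 ≠ q1 := fun e => absurd (e ▸ hb12) (lt_irrefl _)
  have hq31 : q3 ≠ q1 := fun e => absurd (e ▸ (hb12.trans hb23)) (lt_irrefl _)
  have hq32 : q3 ≠ q2 := fun e => absurd (e ▸ hb23) (lt_irrefl _)
  have hpq : ∀ x y : Pt, (x = p1 ∨ x = p2 ∨ x = p3) → (y = q1 ∨ y = q2 ∨ y = q3) →
      x ≠ y := by
    intro x y hx hy he
    have hxa : cA p3 ≤ cA x := by rcases hx with rfl | rfl | rfl <;> linarith
    have hya : cA y ≤ cA q3 := by rcases hy with rfl | rfl | rfl <;> linarith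
    rw [he] at hxa
    linarith
  -- slots
  obtain ⟨hE0, hE1, hE2⟩ := up_free3 hcover1
  obtain ⟨k1, k2, hk12, hk2le, hEk1, hEk2⟩ := up_free2 hcover2
  obtain ⟨k3, hk3le, hEk3⟩ := up_free1 hcover3
  obtain ⟨hF3, hF4, hF5⟩ := down_free3 hcovb1
  obtain ⟨l1, l2, hl12, hl1ge, hl2le, hFl1, hFl2⟩ := down_free2 hcovb2
  obtain ⟨l3, hl3ge, hl3le, hFl3⟩ := down_free1 hcovb3
  obtain ⟨hW0, hW1, hW4⟩ := bmax_free hwmax'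
  -- the finset
  set bonus : Pt × ℕ := if w = p1 ∨ w = p2 ∨ w = p3 then (w, 4) else (w, 0) with hbonus
  set Sp : Finset (Pt × ℕ) :=
    ({p1} ×ˢ ({0, 1, 2} : Finset ℕ)) ∪ (({p2} ×ˢ {k1, k2}) ∪ ({p3} ×ˢ {k3})) with hSp
  set Sq : Finset (Pt × ℕ) :=
    ({q1} ×ˢ ({3, 4, 5} : Finset ℕ)) ∪ (({q2} ×ˢ {l1, l2}) ∪ ({q3} ×ˢ {l3})) with hSq
  refine ⟨insert bonus (Sp ∪ Sq), ?_, ?_, ?_⟩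
  · -- cardinality
    have c012 : ({0, 1, 2} : Finset ℕ).card = 3 := by decide
    have c345 : ({3, 4, 5} : Finset ℕ).card = 3 := by decide
    have ck : ({k1, k2} : Finset ℕ).card = 2 := by
      rw [Finset.card_insert_of_notMem (by simp; omega)]; simp
    have cl : ({l1, l2} : Finset ℕ).card = 2 := by
      rw [Finset.card_insert_of_notMem (by simp; omega)]; simp
    have cSp : Sp.card = 6 := by
      rw [hSp, Finset.card_union_of_disjoint, Finset.card_union_of_disjoint]
      · simp only [Finset.card_product, Finset.card_singleton, one_mul, c012, ck]
      · exact prod_disj hp32.symm _ _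
      · rw [Finset.disjoint_union_right]
        exact ⟨prod_disj hp21.symm _ _, prod_disj hp31.symm _ _⟩
    have cSq : Sq.card = 6 := by
      rw [hSq, Finset.card_union_of_disjoint, Finset.card_union_of_disjoint]
      · simp only [Finset.card_product, Finset.card_singleton, one_mul, c345, cl]
      · exact prod_disj hq32.symm _ _
      · rw [Finset.disjoint_union_right]
        exact ⟨prod_disj hq21.symm _ _, prod_disj hq31.symm _ _⟩
    have hdisjpq : Disjoint Sp Sq := by
      rw [Finset.disjoint_left]
      rintro ⟨a, b⟩ hm hm'
      rw [hSp] at hm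
      rw [hSq] at hm'
      simp only [Finset.mem_union, Finset.mem_product, Finset.mem_singleton] at hm hm'
      have h1 : a = p1 ∨ a = p2 ∨ a = p3 := by
        rcases hm with ⟨h, -⟩ | ⟨h, -⟩ | ⟨h, -⟩
        · exact Or.inl h
        · exact Or.inr (Or.inl h)
        · exact Or.inr (Or.inr h)
      have h2 : a = q1 ∨ a = q2 ∨ a = q3 := by
        rcases hm' with ⟨h, -⟩ | ⟨h, -⟩ | ⟨h, -⟩
        · exact Or.inl h
        · exact Or.inr (Or.inl h)
        · exact Or.inr (Or.inr h)
      exact hpq a a h1 h2 rfl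
    have hbnotin : bonus ∉ Sp ∪ Sq := by
      intro hmem
      rw [Finset.mem_union] at hmem
      by_cases hwp : w = p1 ∨ w = p2 ∨ w = p3
      · rw [hbonus, if_pos hwp] at hmem
        rcases hmem with hmem | hmem
        · rw [hSp] at hmem
          simp only [Finset.mem_union, Finset.mem_product, Finset.mem_singleton,
            Finset.mem_insert] at hmem
          omega
        · rw [hSq] at hmem
          simp only [Finset.mem_union, Finset.mem_product, Finset.mem_singleton,
            Finset.mem_insert] at hmem
          rcases hmem with ⟨h', -⟩ | ⟨h', -⟩ | ⟨h', -⟩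
          · exact hpq w q1 hwp (Or.inl rfl) h'
          · exact hpq w q2 hwp (Or.inr (Or.inl rfl)) h'
          · exact hpq w q3 hwp (Or.inr (Or.inr rfl)) h'
      · rw [hbonus, if_neg hwp] at hmem
        rcases hmem with hmem | hmem
        · rw [hSp] at hmem
          simp only [Finset.mem_union, Finset.mem_product, Finset.mem_singleton,
            Finset.mem_insert] at hmem
          rcases hmem with ⟨h', -⟩ | ⟨h', -⟩ | ⟨h', -⟩
          · exact hwp (Or.inl h')
          · exact hwp (Or.inr (Or.inl h'))
          · exact hwp (Or.inr (Or.inr h'))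
        · rw [hSq] at hmem
          simp only [Finset.mem_union, Finset.mem_product, Finset.mem_singleton,
            Finset.mem_insert] at hmem
          omega
    rw [Finset.card_insert_of_notMem hbnotin, Finset.card_union_of_disjoint hdisjpq,
      cSp, cSq]
  · -- membership in P × range 6
    rintro ⟨sv, sk⟩ hs
    rw [Finset.mem_insert] at hs
    rcases hs with hs | hs
    · by_cases hwp : w = p1 ∨ w = p2 ∨ w = p3
      · rw [hbonus, if_pos hwp] at hs
        rw [Prod.ext_iff] at hs
        obtain ⟨h1, h2⟩ := hs
        exact ⟨h1 ▸ hw, by omega⟩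
      · rw [hbonus, if_neg hwp] at hs
        rw [Prod.ext_iff] at hs
        obtain ⟨h1, h2⟩ := hs
        exact ⟨h1 ▸ hw, by omega⟩
    · rw [Finset.mem_union, hSp, hSq] at hs
      rcases hs with hs | hs <;>
        simp only [Finset.mem_union, Finset.mem_product, Finset.mem_singleton,
          Finset.mem_insert] at hs
      · rcases hs with ⟨rfl, h'⟩ | ⟨rfl, h'⟩ | ⟨rfl, h'⟩
        · exact ⟨hp1, by omega⟩
        · exact ⟨hp2, by omega⟩
        · exact ⟨hp3, by omega⟩
      · rcases hs with ⟨rfl, h'⟩ | ⟨rfl, h'⟩ | ⟨rfl, h'⟩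
        · exact ⟨hq1, by omega⟩
        · exact ⟨hq2, by omega⟩
        · exact ⟨hq3, by omega⟩
  · -- emptiness
    rintro ⟨sv, sk⟩ hs
    rw [Finset.mem_insert] at hs
    rcases hs with hs | hs
    · by_cases hwp : w = p1 ∨ w = p2 ∨ w = p3
      · rw [hbonus, if_pos hwp, Prod.ext_iff] at hs
        obtain ⟨h1, h2⟩ := hs
        simp only at h1 h2
        subst h1; subst h2
        exact hW4
      · rw [hbonus, if_neg hwp, Prod.ext_iff] at hs
        obtain ⟨h1, h2⟩ := hs
        simp only at h1 h2
        subst h1; subst h2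
        exact hW0
    · rw [Finset.mem_union, hSp, hSq] at hs
      rcases hs with hs | hs <;>
        simp only [Finset.mem_union, Finset.mem_product, Finset.mem_singleton,
          Finset.mem_insert] at hs
      · rcases hs with ⟨rfl, rfl | rfl | rfl⟩ | ⟨rfl, rfl | rfl⟩ | ⟨rfl, rfl⟩
        · exact hE0
        · exact hE1
        · exact hE2
        · exact hEk1
        · exact hEk2
        · exact hEk3
      · rcases hs with ⟨rfl, rfl | rfl | rfl⟩ | ⟨rfl, rfl | rfl⟩ | ⟨rfl, rfl⟩
        · exact hF3
        · exact hF4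
        · exact hF5
        · exact hFl1
        · exact hFl2
        · exact hFl3

end T6
namespace T6
open Finset

variable {P : Finset Pt} {p q r u v w : Pt} {e e' : Sym2 Pt} {s : Pt × ℕ}

def ChSpec (P : Finset Pt) (e : Sym2 Pt) (s : Pt × ℕ) : Prop :=
  s.1 ∈ P ∧ (∃ w, Points P s.1 s.2 w ∧ e = s(s.1, w)) ∧
    ((GoodUp P e ∧ (s.2 = 1 ∨ s.2 = 2 ∨ s.2 = 3)) ∨
     (¬ GoodUp P e ∧ GoodDown P e ∧ (s.2 = 0 ∨ s.2 = 4 ∨ s.2 = 5)))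

def DSpec (P : Finset Pt) (e : Sym2 Pt) (s : Pt × ℕ) : Prop :=
  s.1 ∈ P ∧ (∃ w, Points P s.1 s.2 w ∧ e = s(s.1, w)) ∧
    GoodUp P e ∧ GoodDown P e ∧ (s.2 = 0 ∨ s.2 = 4 ∨ s.2 = 5)

lemma chSpec_exists (hGP : GenPos P) (he : GoodUp P e ∨ GoodDown P e) :
    ∃ s, ChSpec P e s := by
  by_cases hup : GoodUp P e
  · obtain ⟨p, q, hp, hq, hne, hU, he'⟩ := hup
    obtain ⟨v, k, w, hk, hvP, hpt, heq⟩ := up_charge hGP hp hq hne hU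
    refine ⟨(v, k), hvP, ⟨w, hpt, by rw [he', heq]⟩, Or.inl ⟨?_, hk⟩⟩
    exact ⟨p, q, hp, hq, hne, hU, he'⟩
  · have hdn : GoodDown P e := he.resolve_left hup
    obtain ⟨p, q, hp, hq, hne, hD, he'⟩ := hdn
    obtain ⟨v, k, w, hk, hvP, hpt, heq⟩ := down_charge hGP hp hq hne hD
    exact ⟨(v, k), hvP, ⟨w, hpt, by rw [he', heq]⟩,
      Or.inr ⟨hup, ⟨p, q, hp, hq, hne, hD, he'⟩, hk⟩⟩

lemma dSpec_exists (hGP : GenPos P) (h1 : GoodUp P e) (h2 : GoodDown P e) :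
    ∃ s, DSpec P e s := by
  obtain ⟨p, q, hp, hq, hne, hD, he'⟩ := h2
  obtain ⟨v, k, w, hk, hvP, hpt, heq⟩ := down_charge hGP hp hq hne hD
  exact ⟨(v, k), hvP, ⟨w, hpt, by rw [he', heq]⟩, h1,
    ⟨p, q, hp, hq, hne, hD, he'⟩, hk⟩

lemma chSpec_det (h : ChSpec P e s) (h' : ChSpec P e' s) : e = e' := by
  obtain ⟨-, ⟨w, hw, rfl⟩, -⟩ := h
  obtain ⟨-, ⟨w', hw', rfl⟩, -⟩ := h'
  rw [points_unique hw hw']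

lemma dSpec_det (h : DSpec P e s) (h' : DSpec P e' s) : e = e' := by
  obtain ⟨-, ⟨w, hw, rfl⟩, -⟩ := h
  obtain ⟨-, ⟨w', hw', rfl⟩, -⟩ := h'
  rw [points_unique hw hw']

lemma chSpec_dSpec (h : ChSpec P e s) (h' : DSpec P e' s) : False := by
  obtain ⟨-, ⟨w, hw, he⟩, hcase⟩ := h
  obtain ⟨-, ⟨w', hw', he'⟩, hup', hdn', hk'⟩ := h'
  rcases hcase with ⟨hup, hk⟩ | ⟨hnup, -, -⟩
  · omega
  · have heq : e = e' := by rw [he, he', points_unique hw hw']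
    exact hnup (heq ▸ hup')

open scoped Classical in
noncomputable def chF (P : Finset Pt) (e : Sym2 Pt) : Pt × ℕ :=
  if h : ∃ s, ChSpec P e s then h.choose else ((0, 0), 0)

open scoped Classical in
noncomputable def dchF (P : Finset Pt) (e : Sym2 Pt) : Pt × ℕ :=
  if h : ∃ s, DSpec P e s then h.choose else ((0, 0), 0)

lemma chF_spec (h : ∃ s, ChSpec P e s) : ChSpec P e (chF P e) := by
  rw [chF]
  rw [dif_pos h]
  exact h.choose_spec

lemma dchF_spec (h : ∃ s, DSpec P e s) : DSpec P e (dchF P e) := by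
  rw [dchF]
  rw [dif_pos h]
  exact h.choose_spec

lemma EF_mem (he : e ∈ EF P) : GoodUp P e ∨ GoodDown P e := by
  classical
  rw [EF] at he
  simpa using (Finset.mem_filter.1 he).2

lemma DF_mem (he : e ∈ DF P) : GoodUp P e ∧ GoodDown P e := by
  classical
  rw [DF] at he
  simpa using (Finset.mem_filter.1 he).2

lemma main_count (hGP : GenPos P) (h6 : 6 ≤ P.card) :
    (EF P).card + (DF P).card + 13 ≤ 6 * P.card := by
  classical
  obtain ⟨EC, hEC13, hECmem, hECempty⟩ := thirteen hGP h6
  set A := (EF P).image (chF P) with hA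
  set B := (DF P).image (dchF P) with hB
  have hspecA : ∀ e ∈ EF P, ChSpec P e (chF P e) := fun e he =>
    chF_spec (chSpec_exists hGP (EF_mem he))
  have hspecB : ∀ e ∈ DF P, DSpec P e (dchF P e) := fun e he =>
    dchF_spec (dSpec_exists hGP (DF_mem he).1 (DF_mem he).2)
  have hcardA : A.card = (EF P).card := Finset.card_image_of_injOn
    (fun e he e' he' heq => chSpec_det (hspecA e he) (heq ▸ hspecA e' he'))
  have hcardB : B.card = (DF P).card := Finset.card_image_of_injOn
    (fun e he e' he' heq => dSpec_det (hspecB e he) (heq ▸ hspecB e' he'))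
  have hAB : Disjoint A B := by
    rw [Finset.disjoint_left]
    intro s hsA hsB
    obtain ⟨e, he, rfl⟩ := Finset.mem_image.1 hsA
    obtain ⟨e', he', heq⟩ := Finset.mem_image.1 hsB
    exact chSpec_dSpec (hspecA e he) (heq ▸ hspecB e' he')
  have hAEC : Disjoint A EC := by
    rw [Finset.disjoint_left]
    intro s hsA hsEC
    obtain ⟨e, he, rfl⟩ := Finset.mem_image.1 hsA
    obtain ⟨-, ⟨w, ⟨hwP, hwC, -⟩, -⟩, -⟩ := hspecA e he
    exact hECempty _ hsEC w hwP hwC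
  have hBEC : Disjoint B EC := by
    rw [Finset.disjoint_left]
    intro s hsB hsEC
    obtain ⟨e, he, rfl⟩ := Finset.mem_image.1 hsB
    obtain ⟨-, ⟨w, ⟨hwP, hwC, -⟩, -⟩, -⟩ := hspecB e he
    exact hECempty _ hsEC w hwP hwC
  have hsub : (A ∪ B) ∪ EC ⊆ P ×ˢ Finset.range 6 := by
    intro s hs
    rw [Finset.mem_union, Finset.mem_union] at hs
    rw [Finset.mem_product, Finset.mem_range]
    rcases hs with (hs | hs) | hs
    · obtain ⟨e, he, rfl⟩ := Finset.mem_image.1 hs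
      obtain ⟨h1, -, hcase⟩ := hspecA e he
      rcases hcase with ⟨-, hk⟩ | ⟨-, -, hk⟩ <;> exact ⟨h1, by omega⟩
    · obtain ⟨e, he, rfl⟩ := Finset.mem_image.1 hs
      obtain ⟨h1, -, -, -, hk⟩ := hspecB e he
      exact ⟨h1, by omega⟩
    · obtain ⟨h1, h2⟩ := hECmem s hs
      exact ⟨h1, h2⟩
  have hcards : ((A ∪ B) ∪ EC).card = A.card + B.card + EC.card := by
    rw [Finset.card_union_of_disjoint, Finset.card_union_of_disjoint hAB]
    rw [Finset.disjoint_union_left]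
    exact ⟨hAEC, hBEC⟩
  have htot := Finset.card_le_card hsub
  rw [hcards, Finset.card_product, Finset.card_range] at htot
  omega

end T6
/-- Every Θ₆-graph on `n ≥ 3` points in general position has at most `5n − 12` edges. -/
theorem theta6_edge_upper_bound (P : Finset Pt) (hP : GenPos P) (hn : 3 ≤ P.card) :
    (theta6 P).edgeSet.ncard ≤ 5 * P.card - 12 := by
  classical
  by_cases h6 : 6 ≤ P.card
  · have hmap : (Sym2.map (Subtype.val) '' (theta6 P).edgeSet) ⊆ ↑(T6.EF P) := by
      rintro e' ⟨e, he, rfl⟩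
      induction e with
      | _ x y =>
        rw [SimpleGraph.mem_edgeSet] at he
        obtain ⟨hne, hor⟩ := he
        have hvne : x.1 ≠ y.1 := fun h => hne (Subtype.ext h)
        rw [Sym2.map_pair_eq, Finset.mem_coe, T6.EF, Finset.mem_filter]
        refine ⟨Finset.mk_mem_sym2_iff.2 ⟨x.2, y.2⟩, ?_⟩
        rcases hor with h | h
        · exact Or.inl ⟨x.1, y.1, x.2, y.2, hvne, h, rfl⟩
        · exact Or.inr ⟨x.1, y.1, x.2, y.2, hvne, h, rfl⟩
    have h1 : (theta6 P).edgeSet.ncard ≤ (T6.EF P).card := by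
      calc (theta6 P).edgeSet.ncard
          = (Sym2.map Subtype.val '' (theta6 P).edgeSet).ncard :=
            (Set.ncard_image_of_injective _
              (Sym2.map.injective Subtype.val_injective)).symm
        _ ≤ (↑(T6.EF P) : Set (Sym2 Pt)).ncard :=
            Set.ncard_le_ncard hmap (Finset.finite_toSet _)
        _ = (T6.EF P).card := Set.ncard_coe_finset _
    have h2 := T6.main_count hP h6
    have h3 := T6.DF_card_ge (P := P) (Finset.card_pos.1 (by omega))
    omega
  · push_neg at h6
    haveI : DecidableRel (theta6 P).Adj := fun a b => Classical.dec _
    have h1 : (theta6 P).edgeSet.ncard = (theta6 P).edgeFinset.card := by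
      rw [Set.ncard_eq_toFinset_card']
      congr 1
    have h2 : (theta6 P).edgeFinset.card ≤ (Fintype.card {x // x ∈ P}).choose 2 :=
      SimpleGraph.card_edgeFinset_le_card_choose_two
    rw [Fintype.card_coe] at h2
    have h4 : P.card.choose 2 ≤ 5 * P.card - 12 := by
      have hb : P.card = 3 ∨ P.card = 4 ∨ P.card = 5 := by omega
      rcases hb with hb | hb | hb <;> rw [hb] <;> decide
    omega
end
end

section
/- For every n ≥ 7, there exists a set P of n points in the plane in general position whose Θ6-graph G⋆(P) has exactly 5n − 17 edges. -/
noncomputable section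

-- BEGIN construction
def MM (m : ℕ) : ℤ := 10*m+100
def YY (m : ℕ) : ℤ := 3*m+10
def uu (m : ℕ) : ℕ → ℤ
  | 0 => -MM m
  | 1 => MM m
  | 2 => -MM m
  | 3 => MM m
  | (k+4) => (k:ℤ)+1
def vv (m : ℕ) : ℕ → ℤ
  | 0 => -1
  | 1 => -2
  | 2 => YY m
  | 3 => YY m + 1
  | (k+4) => 3*((k:ℤ)+1)
def bb (m i : ℕ) : ℤ := uu m i + vv m i
def cc (m i : ℕ) : ℤ := vv m i - uu m i
def pp (m i : ℕ) : Pt := ((uu m i : ℝ)/Real.sqrt 3, (vv m i : ℝ))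

lemma sqrt3_ne : Real.sqrt 3 ≠ 0 := by positivity

lemma cA_pp (m i : ℕ) : cA (pp m i) = ((vv m i : ℤ) : ℝ) := rfl
lemma cB_pp (m i : ℕ) : cB (pp m i) = ((bb m i : ℤ) : ℝ) := by
  unfold cB pp bb
  rw [← mul_div_assoc, mul_div_cancel_left₀ _ sqrt3_ne]
  push_cast; ring
lemma cC_pp (m i : ℕ) : cC (pp m i) = ((cc m i : ℤ) : ℝ) := by
  unfold cC pp cc
  rw [neg_mul, ← mul_div_assoc, mul_div_cancel_left₀ _ sqrt3_ne]
  push_cast; ring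

lemma castMin (a b : ℤ) : ((min a b : ℤ) : ℝ) = min (a:ℝ) (b:ℝ) := Int.cast_mono.map_min
lemma castMax (a b : ℤ) : ((max a b : ℤ) : ℝ) = max (a:ℝ) (b:ℝ) := Int.cast_mono.map_max

def upOcc (m k i j : ℕ) : Prop :=
  min (vv m i) (vv m j) < vv m k ∧ bb m k < max (bb m i) (bb m j) ∧ cc m k < max (cc m i) (cc m j)
def dnOcc (m k i j : ℕ) : Prop :=
  vv m k < max (vv m i) (vv m j) ∧ min (bb m i) (bb m j) < bb m k ∧ min (cc m i) (cc m j) < cc m k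

lemma mem_upTriInt_iff (m k i j : ℕ) : pp m k ∈ upTriInt (pp m i) (pp m j) ↔ upOcc m k i j := by
  simp only [upTriInt, Set.mem_setOf_eq, cA_pp, cB_pp, cC_pp, ← castMin, ← castMax,
    Int.cast_lt, upOcc]
lemma mem_dnTriInt_iff (m k i j : ℕ) : pp m k ∈ downTriInt (pp m i) (pp m j) ↔ dnOcc m k i j := by
  simp only [downTriInt, Set.mem_setOf_eq, cA_pp, cB_pp, cC_pp, ← castMin, ← castMax,
    Int.cast_lt, dnOcc]

def PS (m : ℕ) : Finset Pt := (Finset.range (m+4)).image (pp m)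

lemma mem_PS {m : ℕ} {r : Pt} : r ∈ PS m ↔ ∃ k, k < m+4 ∧ pp m k = r := by
  simp [PS, Finset.mem_image, Finset.mem_range]

lemma vals_ne (m : ℕ) {i j : ℕ} (hi : i < m+4) (hj : j < m+4) (hij : i ≠ j) :
    vv m i ≠ vv m j ∧ bb m i ≠ bb m j ∧ cc m i ≠ cc m j := by
  rcases i with _|_|_|_|i <;> rcases j with _|_|_|_|j <;>
    simp_all [uu, vv, bb, cc, MM, YY] <;> omega

lemma pp_mem {m k : ℕ} (hk : k < m+4) : pp m k ∈ PS m :=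
  mem_PS.2 ⟨k, hk, rfl⟩

lemma emptyUp_iff {m i j : ℕ} :
    EmptyUp (PS m) (pp m i) (pp m j) ↔ ∀ k < m+4, ¬ upOcc m k i j := by
  unfold EmptyUp
  constructor
  · intro h k hk hocc
    exact h _ (pp_mem hk) ((mem_upTriInt_iff m k i j).2 hocc)
  · rintro h r hr hmem
    obtain ⟨k, hk, rfl⟩ := mem_PS.1 hr
    exact h k hk ((mem_upTriInt_iff m k i j).1 hmem)

lemma emptyDown_iff {m i j : ℕ} :
    EmptyDown (PS m) (pp m i) (pp m j) ↔ ∀ k < m+4, ¬ dnOcc m k i j := by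
  unfold EmptyDown
  constructor
  · intro h k hk hocc
    exact h _ (pp_mem hk) ((mem_dnTriInt_iff m k i j).2 hocc)
  · rintro h r hr hmem
    obtain ⟨k, hk, rfl⟩ := mem_PS.1 hr
    exact h k hk ((mem_dnTriInt_iff m k i j).1 hmem)

-- corner-corner edges
lemma eD01 (m : ℕ) : EmptyDown (PS m) (pp m 0) (pp m 1) := by
  rw [emptyDown_iff]
  intro k hk
  rcases k with _|_|_|_|k <;> simp [dnOcc, uu, vv, bb, cc, MM, YY] <;> omega

lemma eU23 (m : ℕ) : EmptyUp (PS m) (pp m 2) (pp m 3) := by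
  rw [emptyUp_iff]
  intro k hk
  rcases k with _|_|_|_|k <;> simp [upOcc, uu, vv, bb, cc, MM, YY] <;> omega

lemma eU02 (m : ℕ) : EmptyUp (PS m) (pp m 0) (pp m 2) := by
  rw [emptyUp_iff]
  intro k hk
  rcases k with _|_|_|_|k <;> simp [upOcc, uu, vv, bb, cc, MM, YY] <;> omega

lemma eD13 (m : ℕ) : EmptyDown (PS m) (pp m 1) (pp m 3) := by
  rw [emptyDown_iff]
  intro k hk
  rcases k with _|_|_|_|k <;> simp [dnOcc, uu, vv, bb, cc, MM, YY] <;> omega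

-- corner-cluster edges
lemma eD0c (m : ℕ) {j : ℕ} (hj : 4 ≤ j) (hj2 : j < m+4) :
    EmptyDown (PS m) (pp m 0) (pp m j) := by
  obtain ⟨j', rfl⟩ : ∃ t, j = t+4 := ⟨j-4, by omega⟩
  rw [emptyDown_iff]
  intro k hk
  rcases k with _|_|_|_|k <;> simp [dnOcc, uu, vv, bb, cc, MM, YY] <;> omega

lemma eD1c (m : ℕ) {j : ℕ} (hj : 4 ≤ j) (hj2 : j < m+4) :
    EmptyDown (PS m) (pp m 1) (pp m j) := by
  obtain ⟨j', rfl⟩ : ∃ t, j = t+4 := ⟨j-4, by omega⟩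
  rw [emptyDown_iff]
  intro k hk
  rcases k with _|_|_|_|k <;> simp [dnOcc, uu, vv, bb, cc, MM, YY] <;> omega

lemma eU2c (m : ℕ) {j : ℕ} (hj : 4 ≤ j) (hj2 : j < m+4) :
    EmptyUp (PS m) (pp m 2) (pp m j) := by
  obtain ⟨j', rfl⟩ : ∃ t, j = t+4 := ⟨j-4, by omega⟩
  rw [emptyUp_iff]
  intro k hk
  rcases k with _|_|_|_|k <;> simp [upOcc, uu, vv, bb, cc, MM, YY] <;> omega

lemma eU3c (m : ℕ) {j : ℕ} (hj : 4 ≤ j) (hj2 : j < m+4) :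
    EmptyUp (PS m) (pp m 3) (pp m j) := by
  obtain ⟨j', rfl⟩ : ∃ t, j = t+4 := ⟨j-4, by omega⟩
  rw [emptyUp_iff]
  intro k hk
  rcases k with _|_|_|_|k <;> simp [upOcc, uu, vv, bb, cc, MM, YY] <;> omega

-- cluster consecutive edges
lemma eUcons (m : ℕ) {i : ℕ} (hi : 4 ≤ i) (hi2 : i + 1 < m+4) :
    EmptyUp (PS m) (pp m i) (pp m (i+1)) := by
  obtain ⟨i', rfl⟩ : ∃ t, i = t+4 := ⟨i-4, by omega⟩
  have h5 : i' + 4 + 1 = (i'+1) + 4 := by omega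
  rw [h5, emptyUp_iff]
  intro k hk
  rcases k with _|_|_|_|k <;> simp [upOcc, uu, vv, bb, cc, MM, YY] <;> omega

-- witnesses for non-edges
lemma notEmpty_of_up {m k i j : ℕ} (hk : k < m+4) (h : upOcc m k i j) :
    ¬ EmptyUp (PS m) (pp m i) (pp m j) := by
  intro he
  exact (emptyUp_iff.1 he) k hk h

lemma notEmpty_of_dn {m k i j : ℕ} (hk : k < m+4) (h : dnOcc m k i j) :
    ¬ EmptyDown (PS m) (pp m i) (pp m j) := by
  intro he
  exact (emptyDown_iff.1 he) k hk h

lemma wit03 (m : ℕ) (hm : 3 ≤ m) : upOcc m 4 0 3 ∧ dnOcc m 4 0 3 := by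
  constructor <;> simp [upOcc, dnOcc, uu, vv, bb, cc, MM, YY] <;> omega

lemma wit12 (m : ℕ) (hm : 3 ≤ m) : upOcc m 4 1 2 ∧ dnOcc m 4 1 2 := by
  constructor <;> simp [upOcc, dnOcc, uu, vv, bb, cc, MM, YY] <;> omega

lemma witClus (m : ℕ) {i j : ℕ} (hi : 4 ≤ i) (hj : i + 2 ≤ j) (hj2 : j < m+4) :
    upOcc m (i+1) i j ∧ dnOcc m (i+1) i j := by
  obtain ⟨i', rfl⟩ : ∃ t, i = t+4 := ⟨i-4, by omega⟩
  obtain ⟨j', rfl⟩ : ∃ t, j = t+4 := ⟨j-4, by omega⟩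
  have h5 : i' + 4 + 1 = (i'+1) + 4 := by omega
  rw [h5]
  constructor <;> simp [upOcc, dnOcc, uu, vv, bb, cc, MM, YY] <;> omega

-- index graph relation
def RR (i j : ℕ) : Prop :=
  (i < 4 ∧ j < 4 ∧ i ≠ j ∧ i + j ≠ 3) ∨ (i < 4 ∧ 4 ≤ j) ∨ (j < 4 ∧ 4 ≤ i) ∨
  (4 ≤ i ∧ 4 ≤ j ∧ (i = j + 1 ∨ j = i + 1))

instance : DecidableRel RR := fun i j => by unfold RR; infer_instance

lemma RR_symm {i j : ℕ} (h : RR i j) : RR j i := by unfold RR at h ⊢; omega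

lemma RR_irrefl (i : ℕ) : ¬ RR i i := by unfold RR; omega

lemma adj_iff_lt (m : ℕ) (hm : 3 ≤ m) {i j : ℕ} (hij : i < j) (hj : j < m+4) :
    (EmptyUp (PS m) (pp m i) (pp m j) ∨ EmptyDown (PS m) (pp m i) (pp m j)) ↔ RR i j := by
  rcases lt_or_ge j 4 with h4 | h4
  · -- both corners
    have hi4 : i < 4 := lt_trans hij h4
    interval_cases i <;> interval_cases j
    · exact iff_of_true (Or.inr (eD01 m)) (by unfold RR; omega)
    · exact iff_of_true (Or.inl (eU02 m)) (by unfold RR; omega)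
    · refine iff_of_false ?_ (by unfold RR; omega)
      rintro (h | h)
      · exact notEmpty_of_up (by omega) (wit03 m hm).1 h
      · exact notEmpty_of_dn (by omega) (wit03 m hm).2 h
    · refine iff_of_false ?_ (by unfold RR; omega)
      rintro (h | h)
      · exact notEmpty_of_up (by omega) (wit12 m hm).1 h
      · exact notEmpty_of_dn (by omega) (wit12 m hm).2 h
    · exact iff_of_true (Or.inr (eD13 m)) (by unfold RR; omega)
    · exact iff_of_true (Or.inl (eU23 m)) (by unfold RR; omega)
  · rcases lt_or_ge i 4 with h4i | h4i
    · -- corner-cluster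
      refine iff_of_true ?_ (by unfold RR; omega)
      interval_cases i
      · exact Or.inr (eD0c m h4 hj)
      · exact Or.inr (eD1c m h4 hj)
      · exact Or.inl (eU2c m h4 hj)
      · exact Or.inl (eU3c m h4 hj)
    · -- both cluster
      rcases eq_or_lt_of_le (Nat.succ_le_of_lt hij) with hcons | hskip
      · rw [← hcons]
        exact iff_of_true (Or.inl (eUcons m h4i (by omega))) (by unfold RR; omega)
      · refine iff_of_false ?_ (by unfold RR; omega)
        rintro (h | h)
        · exact notEmpty_of_up (by omega) (witClus m h4i (by omega) hj).1 h
        · exact notEmpty_of_dn (by omega) (witClus m h4i (by omega) hj).2 h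

lemma pp_inj (m : ℕ) {i j : ℕ} (hi : i < m+4) (hj : j < m+4) (h : pp m i = pp m j) : i = j := by
  by_contra hij
  have h2 := congrArg Prod.snd h
  simp only [pp] at h2
  exact (vals_ne m hi hj hij).1 (Int.cast_injective h2)

lemma genpos (m : ℕ) : GenPos (PS m) := by
  intro p hp q hq hne
  obtain ⟨i, hi, rfl⟩ := mem_PS.1 hp
  obtain ⟨j, hj, rfl⟩ := mem_PS.1 hq
  have hij : i ≠ j := fun h => hne (by rw [h])
  obtain ⟨ha, hb, hc⟩ := vals_ne m hi hj hij
  have hdx : Real.sqrt 3 * ((pp m j).1 - (pp m i).1) = ((uu m j - uu m i : ℤ) : ℝ) := by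
    simp only [pp]
    rw [mul_sub, ← mul_div_assoc, ← mul_div_assoc,
      mul_div_cancel_left₀ _ sqrt3_ne, mul_div_cancel_left₀ _ sqrt3_ne]
    push_cast; ring
  have hdy : (pp m j).2 - (pp m i).2 = ((vv m j - vv m i : ℤ) : ℝ) := by
    simp only [pp]; push_cast; ring
  refine ⟨?_, ?_, ?_⟩
  · simp only [pp]
    exact fun h => ha (Int.cast_injective h)
  · rw [hdy, hdx, Ne, Int.cast_inj]
    intro h
    apply hc
    unfold cc
    omega
  · rw [hdy, neg_mul, hdx, ← Int.cast_neg, Ne, Int.cast_inj]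
    intro h
    apply hb
    unfold bb
    omega

lemma adj_iff (m : ℕ) (hm : 3 ≤ m) {i j : ℕ} (hi : i < m+4) (hj : j < m+4) (hij : i ≠ j) :
    (EmptyUp (PS m) (pp m i) (pp m j) ∨ EmptyDown (PS m) (pp m i) (pp m j)) ↔ RR i j := by
  rcases lt_or_gt_of_ne hij with h | h
  · exact adj_iff_lt m hm h hj
  · have := adj_iff_lt m hm h hi
    rw [EmptyUp, EmptyDown, upTriInt_comm, downTriInt_comm, ← EmptyUp, ← EmptyDown, this]
    exact ⟨RR_symm, RR_symm⟩

def GI (m : ℕ) : SimpleGraph (Fin (m+4)) where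
  Adj i j := RR i.1 j.1
  symm := ⟨fun _ _ h => RR_symm h⟩
  loopless := ⟨fun i => RR_irrefl i.1⟩

instance (m : ℕ) : DecidableRel (GI m).Adj := fun i j =>
  inferInstanceAs (Decidable (RR i.1 j.1))

def eqv (m : ℕ) : Fin (m+4) ≃ {x // x ∈ PS m} := by
  refine Equiv.ofBijective (fun i => ⟨pp m i.1, pp_mem i.2⟩) ⟨?_, ?_⟩
  · intro i j h
    have h2 : pp m i.1 = pp m j.1 := congrArg Subtype.val h
    exact Fin.ext (pp_inj m i.2 j.2 h2)
  · rintro ⟨r, hr⟩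
    obtain ⟨k, hk, rfl⟩ := mem_PS.1 hr
    exact ⟨⟨k, hk⟩, rfl⟩

def giso (m : ℕ) (hm : 3 ≤ m) : GI m ≃g theta6 (PS m) := by
  refine ⟨eqv m, ?_⟩
  intro i j
  show (theta6 (PS m)).Adj ⟨pp m i.1, _⟩ ⟨pp m j.1, _⟩ ↔ RR i.1 j.1
  show (⟨pp m i.1, _⟩ : {x // x ∈ PS m}) ≠ ⟨pp m j.1, _⟩ ∧
      (EmptyUp (PS m) (pp m i.1) (pp m j.1) ∨ EmptyDown (PS m) (pp m i.1) (pp m j.1)) ↔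
      RR i.1 j.1
  rcases eq_or_ne i j with rfl | hij
  · simp [RR_irrefl]
  · have hij' : i.1 ≠ j.1 := fun h => hij (Fin.ext h)
    rw [adj_iff m hm i.2 j.2 hij']
    simp only [iff_self_and, ne_eq, Subtype.mk.injEq]
    constructor
    · exact fun h => h.2
    · exact fun h => ⟨fun hcon => hij' (pp_inj m i.2 j.2 hcon), h⟩

open Finset in
def Tcons (m : ℕ) : Finset (ℕ × ℕ) := (Ico 4 (m+3)).image fun i => (i, i+1)
open Finset in
def Tcons' (m : ℕ) : Finset (ℕ × ℕ) := (Ico 4 (m+3)).image fun i => (i+1, i)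

open Finset in
lemma mem_Tcons {m a b : ℕ} : (a, b) ∈ Tcons m ↔ 4 ≤ a ∧ a < m+3 ∧ b = a+1 := by
  simp only [Tcons, mem_image, mem_Ico, Prod.mk.injEq]
  constructor
  · rintro ⟨i, hi, rfl, rfl⟩; exact ⟨hi.1, hi.2, rfl⟩
  · rintro ⟨h1, h2, rfl⟩; exact ⟨a, ⟨h1, h2⟩, rfl, rfl⟩

open Finset in
lemma mem_Tcons' {m a b : ℕ} : (a, b) ∈ Tcons' m ↔ 4 ≤ b ∧ b < m+3 ∧ a = b+1 := by
  simp only [Tcons', mem_image, mem_Ico, Prod.mk.injEq]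
  constructor
  · rintro ⟨i, hi, rfl, rfl⟩; exact ⟨hi.1, hi.2, rfl⟩
  · rintro ⟨h1, h2, rfl⟩; exact ⟨b, ⟨h1, h2⟩, rfl, rfl⟩

open Finset in
def Tall (m : ℕ) : Finset (ℕ × ℕ) :=
  ((range 4) ×ˢ (Ico 4 (m+4))) ∪ ((Ico 4 (m+4)) ×ˢ (range 4)) ∪ Tcons m ∪ Tcons' m ∪
  ({(0,1),(1,0),(2,3),(3,2),(0,2),(2,0),(1,3),(3,1)} : Finset (ℕ × ℕ))

set_option maxHeartbeats 1000000 in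
open Finset in
lemma mem_Tall {m : ℕ} {p : ℕ × ℕ} :
    p ∈ Tall m ↔ RR p.1 p.2 ∧ p.1 < m+4 ∧ p.2 < m+4 := by
  obtain ⟨a, b⟩ := p
  simp only [Tall, mem_union, mem_product, mem_range, mem_Ico, mem_Tcons, mem_Tcons',
    mem_insert, mem_singleton, Prod.mk.injEq, RR]
  omega

open Finset in
lemma card_Tall (m : ℕ) (hm : 3 ≤ m) : #(Tall m) = 10*m+6 := by
  have hinj : Function.Injective (fun i : ℕ => (i, i+1)) := fun a b h => congrArg Prod.fst h
  have hinj' : Function.Injective (fun i : ℕ => (i+1, i)) := fun a b h => congrArg Prod.snd h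
  have dtac : ∀ (X Y : Finset (ℕ × ℕ)),
      (∀ a b : ℕ, (a,b) ∈ X → (a,b) ∈ Y → False) → Disjoint X Y := by
    intro X Y h
    rw [disjoint_left]
    rintro ⟨a, b⟩ h1 h2
    exact h a b h1 h2
  rw [Tall, card_union_of_disjoint, card_union_of_disjoint, card_union_of_disjoint,
    card_union_of_disjoint]
  · rw [card_product, card_range, Nat.card_Ico, card_product, card_range, Nat.card_Ico,
      Tcons, Tcons', card_image_of_injective _ hinj, card_image_of_injective _ hinj',
      Nat.card_Ico]
    have h8 : #({(0,1),(1,0),(2,3),(3,2),(0,2),(2,0),(1,3),(3,1)} : Finset (ℕ × ℕ)) = 8 := by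
      decide
    rw [h8]
    omega
  · apply dtac; intro a b h1 h2
    simp only [mem_product, mem_range, mem_Ico] at h1 h2
    omega
  · apply dtac; intro a b h1 h2
    simp only [mem_union, mem_product, mem_range, mem_Ico, mem_Tcons] at h1 h2
    omega
  · apply dtac; intro a b h1 h2
    simp only [mem_union, mem_product, mem_range, mem_Ico, mem_Tcons, mem_Tcons'] at h1 h2
    omega
  · apply dtac; intro a b h1 h2
    simp only [mem_union, mem_product, mem_range, mem_Ico, mem_Tcons, mem_Tcons',
      mem_insert, mem_singleton, Prod.mk.injEq] at h1 h2
    omega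

open Finset in
lemma card_edges_GI (m : ℕ) (hm : 3 ≤ m) : #(GI m).edgeFinset = 5*m+3 := by
  have h2 := SimpleGraph.two_mul_card_edgeFinset (G := GI m)
  have hcard : #(univ.filter fun (x : Fin (m+4) × Fin (m+4)) => (GI m).Adj x.1 x.2)
      = #(Tall m) := by
    apply card_bij (fun p _ => ((p.1.1 : ℕ), (p.2.1 : ℕ)))
    · rintro ⟨a, b⟩ hab
      rw [mem_filter] at hab
      exact mem_Tall.2 ⟨hab.2, a.2, b.2⟩
    · rintro ⟨a, b⟩ _ ⟨a', b'⟩ _ h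
      rw [Prod.mk.injEq] at h ⊢
      exact ⟨Fin.ext h.1, Fin.ext h.2⟩
    · rintro ⟨a, b⟩ hab
      rw [mem_Tall] at hab
      exact ⟨(⟨a, hab.2.1⟩, ⟨b, hab.2.2⟩), mem_filter.2 ⟨mem_univ _, hab.1⟩, rfl⟩
  have hshape : #(univ.filter fun (x : Fin (m+4) × Fin (m+4)) => (GI m).Adj x.1 x.2)
      = #(univ.filter fun ((x, y) : Fin (m+4) × Fin (m+4)) => (GI m).Adj x y) := by
    congr 1
  rw [← hshape, hcard, card_Tall m hm] at h2
  omega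

lemma card_PS (m : ℕ) : (PS m).card = m + 4 := by
  rw [PS, Finset.card_image_of_injOn, Finset.card_range]
  intro i hi j hj h
  exact pp_inj m (Finset.mem_range.1 hi) (Finset.mem_range.1 hj) h


/-- For every `n ≥ 7` there is a set of `n` points in general position whose Θ₆-graph
has exactly `5n − 17` edges. -/
theorem theta6_many_edges (n : ℕ) (hn : 7 ≤ n) :
    ∃ P : Finset Pt, P.card = n ∧ GenPos P ∧ (theta6 P).edgeSet.ncard = 5 * n - 17 := by
  set m := n - 4 with hm
  have hm3 : 3 ≤ m := by omega
  refine ⟨PS m, by rw [card_PS]; omega, genpos m, ?_⟩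
  have h1 : (theta6 (PS m)).edgeSet.ncard = Nat.card (theta6 (PS m)).edgeSet :=
    (Nat.card_coe_set_eq _).symm
  have h2 : Nat.card (theta6 (PS m)).edgeSet = Nat.card (GI m).edgeSet :=
    Nat.card_congr ((giso m hm3).mapEdgeSet).symm
  have h3 : Nat.card (GI m).edgeSet = (GI m).edgeSet.ncard := Nat.card_coe_set_eq _
  have h4 : (GI m).edgeSet.ncard = (GI m).edgeFinset.card := by
    rw [← SimpleGraph.coe_edgeFinset, Set.ncard_coe_finset]
  rw [h1, h2, h3, h4, card_edges_GI m hm3]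
  omega
end
end

section
/- Every Θ6-graph on a set P of n points in the plane in general position has chromatic number at most 10 (it admits a proper 10-vertex-coloring) and contains an independent set of size at least n/10. -/
noncomputable section

open scoped Classical

-- part 1 lemmas
lemma sumBC (z : Pt) : cB z + cC z = 2 * cA z := by
  simp only [cA, cB, cC]; ring

lemma genpos_ne {Q : Finset Pt} (hQ : GenPos Q) {p q : Pt} (hp : p ∈ Q) (hq : q ∈ Q)
    (h : p ≠ q) : cA p ≠ cA q ∧ cB p ≠ cB q ∧ cC p ≠ cC q := by
  obtain ⟨h1, h2, h3⟩ := hQ p hp q hq h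
  refine ⟨h1, fun he => h3 ?_, fun he => h2 ?_⟩
  · simp only [cB] at he; linarith
  · simp only [cC] at he; linarith

def hdist (p q : Pt) : ℝ :=
  max (|cB p - cB q|) (max (|cC p - cC q|) (|cB p - cB q + (cC p - cC q)|))

lemma hdist_comm (p q : Pt) : hdist p q = hdist q p := by
  simp only [hdist, abs_sub_comm (cB p), abs_sub_comm (cC p)]
  rw [show |cB p - cB q + (cC p - cC q)| = |cB q - cB p + (cC q - cC p)| by
    rw [← abs_neg]; ring_nf]

lemma key9 {a1 b1 c1 a2 b2 c2 a3 b3 c3 M : ℝ}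
    (e1 : b1 + c1 = 2 * a1) (e2 : b2 + c2 = 2 * a2) (e3 : b3 + c3 = 2 * a3)
    (h1 : min a1 a2 < a3) (h2 : b3 < max b1 b2) (h3 : c3 < max c1 c2)
    (hb : |b1 - b2| ≤ M) (hc : |c1 - c2| ≤ M) (hs : |b1 - b2 + (c1 - c2)| ≤ M) :
    |b1 - b3| < M ∧ |c1 - c3| < M ∧ |b1 - b3 + (c1 - c3)| < M := by
  rw [abs_le] at hb hc hs
  obtain ⟨hb1, hb2⟩ := hb; obtain ⟨hc1, hc2⟩ := hc; obtain ⟨hs1, hs2⟩ := hs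
  rcases min_lt_iff.mp h1 with h | h <;> rcases lt_max_iff.mp h2 with h' | h' <;>
    rcases lt_max_iff.mp h3 with h'' | h'' <;>
    exact ⟨abs_lt.mpr ⟨by linarith, by linarith⟩, abs_lt.mpr ⟨by linarith, by linarith⟩,
      abs_lt.mpr ⟨by linarith, by linarith⟩⟩


lemma hdist_le1 (p q : Pt) : |cB p - cB q| ≤ hdist p q := le_max_left _ _
lemma hdist_le2 (p q : Pt) : |cC p - cC q| ≤ hdist p q :=
  le_trans (le_max_left _ _) (le_max_right _ _)
lemma hdist_le3 (p q : Pt) : |cB p - cB q + (cC p - cC q)| ≤ hdist p q :=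
  le_trans (le_max_right _ _) (le_max_right _ _)

lemma abs_neg_sub (x y : ℝ) : |(-x) - (-y)| = |x - y| := by rw [← abs_neg]; ring_nf
lemma abs_neg_sub2 (x y u v : ℝ) : |(-x) - (-y) + ((-u) - (-v))| = |x - y + (u - v)| := by
  rw [← abs_neg]; ring_nf
lemma abs_swap2 (x y u v : ℝ) : |x - y + (u - v)| = |y - x + (v - u)| := by
  rw [← abs_neg]; ring_nf

lemma hdist_lt_of_mem_upTriInt {p q r : Pt} (h : r ∈ upTriInt p q) :
    hdist p r < hdist p q ∧ hdist q r < hdist p q := by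
  obtain ⟨h1, h2, h3⟩ := h
  have K1 := key9 (M := hdist p q) (sumBC p) (sumBC q) (sumBC r) h1 h2 h3
    (hdist_le1 p q) (hdist_le2 p q) (hdist_le3 p q)
  have K2 := key9 (M := hdist p q) (sumBC q) (sumBC p) (sumBC r)
    (by rwa [min_comm]) (by rwa [max_comm]) (by rwa [max_comm])
    (by rw [abs_sub_comm]; exact hdist_le1 p q)
    (by rw [abs_sub_comm]; exact hdist_le2 p q)
    (by rw [abs_swap2]; exact hdist_le3 p q)
  constructor
  · exact max_lt K1.1 (max_lt K1.2.1 K1.2.2)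
  · exact max_lt K2.1 (max_lt K2.2.1 K2.2.2)

lemma hdist_lt_of_mem_downTriInt {p q r : Pt} (h : r ∈ downTriInt p q) :
    hdist p r < hdist p q ∧ hdist q r < hdist p q := by
  obtain ⟨h1, h2, h3⟩ := h
  have e : ∀ z : Pt, (-(cB z)) + (-(cC z)) = 2 * (-(cA z)) := by
    intro z; have := sumBC z; linarith
  have h1' : min (-(cA p)) (-(cA q)) < -(cA r) := by
    rcases lt_max_iff.mp h1 with h | h
    · exact min_lt_iff.mpr (Or.inl (by linarith))
    · exact min_lt_iff.mpr (Or.inr (by linarith))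
  have h2' : -(cB r) < max (-(cB p)) (-(cB q)) := by
    rcases min_lt_iff.mp h2 with h | h
    · exact lt_max_iff.mpr (Or.inl (by linarith))
    · exact lt_max_iff.mpr (Or.inr (by linarith))
  have h3' : -(cC r) < max (-(cC p)) (-(cC q)) := by
    rcases min_lt_iff.mp h3 with h | h
    · exact lt_max_iff.mpr (Or.inl (by linarith))
    · exact lt_max_iff.mpr (Or.inr (by linarith))
  have K1 := key9 (M := hdist p q) (e p) (e q) (e r) h1' h2' h3'
    (by rw [abs_neg_sub]; exact hdist_le1 p q)
    (by rw [abs_neg_sub]; exact hdist_le2 p q)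
    (by rw [abs_neg_sub2]; exact hdist_le3 p q)
  have K2 := key9 (M := hdist p q) (e q) (e p) (e r)
    (by rwa [min_comm]) (by rwa [max_comm]) (by rwa [max_comm])
    (by rw [abs_neg_sub, abs_sub_comm]; exact hdist_le1 p q)
    (by rw [abs_neg_sub, abs_sub_comm]; exact hdist_le2 p q)
    (by rw [abs_neg_sub2, abs_swap2]; exact hdist_le3 p q)
  rw [abs_neg_sub, abs_neg_sub, abs_neg_sub2] at K1 K2
  constructor
  · exact max_lt K1.1 (max_lt K1.2.1 K1.2.2)
  · exact max_lt K2.1 (max_lt K2.2.1 K2.2.2)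


def UpE (Q : Finset Pt) : Finset (Pt × Pt) :=
  (Q ×ˢ Q).filter (fun e => cA e.1 < cA e.2 ∧ EmptyUp Q e.1 e.2)
def DnE (Q : Finset Pt) : Finset (Pt × Pt) :=
  (Q ×ˢ Q).filter (fun e => cA e.1 < cA e.2 ∧ EmptyDown Q e.1 e.2)

def chUp (e : Pt × Pt) : Pt × Fin 3 :=
  if cB e.1 < cB e.2 ∧ cC e.1 < cC e.2 then (e.2, 0)
  else if cB e.1 < cB e.2 then (e.1, 1) else (e.1, 2)

def chDn (e : Pt × Pt) : Pt × Fin 3 :=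
  if cB e.1 < cB e.2 ∧ cC e.1 < cC e.2 then (e.1, 0)
  else if cB e.1 < cB e.2 then (e.2, 1) else (e.2, 2)

lemma mem_UpE {Q : Finset Pt} {e : Pt × Pt} (h : e ∈ UpE Q) :
    e.1 ∈ Q ∧ e.2 ∈ Q ∧ cA e.1 < cA e.2 ∧ EmptyUp Q e.1 e.2 := by
  simp only [UpE, Finset.mem_filter, Finset.mem_product] at h
  exact ⟨h.1.1, h.1.2, h.2.1, h.2.2⟩

lemma mem_DnE {Q : Finset Pt} {e : Pt × Pt} (h : e ∈ DnE Q) :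
    e.1 ∈ Q ∧ e.2 ∈ Q ∧ cA e.1 < cA e.2 ∧ EmptyDown Q e.1 e.2 := by
  simp only [DnE, Finset.mem_filter, Finset.mem_product] at h
  exact ⟨h.1.1, h.1.2, h.2.1, h.2.2⟩

lemma chUp_injOn {Q : Finset Pt} (hQ : GenPos Q) : Set.InjOn chUp (UpE Q) := by
  intro e he e' he' heq
  obtain ⟨hl, hu, hA, hE⟩ := mem_UpE he
  obtain ⟨hl', hu', hA', hE'⟩ := mem_UpE he'
  -- sum facts
  have hsum : cB e.2 + cC e.2 > cB e.1 + cC e.1 := by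
    rw [sumBC, sumBC]; linarith
  have hsum' : cB e'.2 + cC e'.2 > cB e'.1 + cC e'.1 := by
    rw [sumBC, sumBC]; linarith
  unfold chUp at heq
  split_ifs at heq with u1 u2 u3 u4 u5 u6 u7 u8
  · -- rule 0 / rule 0 : e.2 = e'.2
    simp only [Prod.mk.injEq] at heq
    have h2 : e.2 = e'.2 := heq.1
    by_cases h1 : e.1 = e'.1
    · exact Prod.ext h1 h2
    · exfalso
      rcases lt_or_gt_of_ne (genpos_ne hQ hl hl' h1).1 with hlt | hlt
      · exact hE e'.1 hl' ⟨lt_of_le_of_lt (min_le_left _ _) hlt,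
          lt_of_lt_of_le (h2 ▸ u2.1) (le_max_right _ _),
          lt_of_lt_of_le (h2 ▸ u2.2) (le_max_right _ _)⟩
      · exact hE' e.1 hl ⟨lt_of_le_of_lt (min_le_left _ _) hlt,
          lt_of_lt_of_le (h2 ▸ u1.1) (le_max_right _ _),
          lt_of_lt_of_le (h2 ▸ u1.2) (le_max_right _ _)⟩
  · simp only [Prod.mk.injEq] at heq; exact absurd heq.2 (by decide)
  · simp only [Prod.mk.injEq] at heq; exact absurd heq.2 (by decide)
  · simp only [Prod.mk.injEq] at heq; exact absurd heq.2 (by decide)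
  · -- rule 1 / rule 1 : e.1 = e'.1
    simp only [Prod.mk.injEq] at heq
    have h1 : e.1 = e'.1 := heq.1
    -- cC e.2 < cC e.1 and cC e'.2 < cC e'.1
    have hne2 : e.1 ≠ e.2 := fun h => absurd (congrArg cA h) (ne_of_lt hA)
    have hne2' : e'.1 ≠ e'.2 := fun h => absurd (congrArg cA h) (ne_of_lt hA')
    have hC : cC e.2 < cC e.1 := by
      rcases lt_or_gt_of_ne (genpos_ne hQ hl hu hne2).2.2 with h | h
      · exact absurd ⟨u4, h⟩ u1
      · exact h
    have hC' : cC e'.2 < cC e'.1 := by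
      rcases lt_or_gt_of_ne (genpos_ne hQ hl' hu' hne2').2.2 with h | h
      · exact absurd ⟨u6, h⟩ u5
      · exact h
    by_cases h2 : e.2 = e'.2
    · exact Prod.ext h1 h2
    · exfalso
      rcases lt_or_gt_of_ne (genpos_ne hQ hu hu' h2).2.1 with hlt | hlt
      · exact hE' e.2 hu ⟨lt_of_le_of_lt (min_le_left _ _) (h1 ▸ hA),
          lt_of_lt_of_le hlt (le_max_right _ _),
          lt_of_lt_of_le (h1 ▸ hC) (le_max_left _ _)⟩
      · exact hE e'.2 hu' ⟨lt_of_le_of_lt (min_le_left _ _) (h1 ▸ hA'),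
          lt_of_lt_of_le hlt (le_max_right _ _),
          lt_of_lt_of_le (h1 ▸ hC') (le_max_left _ _)⟩
  · simp only [Prod.mk.injEq] at heq; exact absurd heq.2 (by decide)
  · simp only [Prod.mk.injEq] at heq; exact absurd heq.2 (by decide)
  · simp only [Prod.mk.injEq] at heq; exact absurd heq.2 (by decide)
  · -- rule 2 / rule 2 : e.1 = e'.1
    simp only [Prod.mk.injEq] at heq
    have h1 : e.1 = e'.1 := heq.1
    have hB : cB e.2 < cB e.1 := lt_of_not_ge (fun h => u4 (lt_of_le_of_ne h
      (by
        have hne2 : e.1 ≠ e.2 := fun hh => absurd (congrArg cA hh) (ne_of_lt hA)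
        exact (genpos_ne hQ hl hu hne2).2.1)))
    have hB' : cB e'.2 < cB e'.1 := lt_of_not_ge (fun h => u8 (lt_of_le_of_ne h
      (by
        have hne2' : e'.1 ≠ e'.2 := fun hh => absurd (congrArg cA hh) (ne_of_lt hA')
        exact (genpos_ne hQ hl' hu' hne2').2.1)))
    by_cases h2 : e.2 = e'.2
    · exact Prod.ext h1 h2
    · exfalso
      rcases lt_or_gt_of_ne (genpos_ne hQ hu hu' h2).2.2 with hlt | hlt
      · exact hE' e.2 hu ⟨lt_of_le_of_lt (min_le_left _ _) (h1 ▸ hA),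
          lt_of_lt_of_le (h1 ▸ hB) (le_max_left _ _),
          lt_of_lt_of_le hlt (le_max_right _ _)⟩
      · exact hE e'.2 hu' ⟨lt_of_le_of_lt (min_le_left _ _) (h1 ▸ hA'),
          lt_of_lt_of_le (h1 ▸ hB') (le_max_left _ _),
          lt_of_lt_of_le hlt (le_max_right _ _)⟩

lemma chDn_injOn {Q : Finset Pt} (hQ : GenPos Q) : Set.InjOn chDn (DnE Q) := by
  intro e he e' he' heq
  obtain ⟨hl, hu, hA, hE⟩ := mem_DnE he
  obtain ⟨hl', hu', hA', hE'⟩ := mem_DnE he'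
  unfold chDn at heq
  split_ifs at heq with u1 u2 u3 u4 u5 u6 u7 u8
  · -- rule 0 / rule 0 : e.1 = e'.1
    simp only [Prod.mk.injEq] at heq
    have h1 : e.1 = e'.1 := heq.1
    by_cases h2 : e.2 = e'.2
    · exact Prod.ext h1 h2
    · exfalso
      rcases lt_or_gt_of_ne (genpos_ne hQ hu hu' h2).1 with hlt | hlt
      · exact hE' e.2 hu ⟨lt_of_lt_of_le hlt (le_max_right _ _),
          lt_of_le_of_lt (min_le_left _ _) (h1 ▸ u1.1),
          lt_of_le_of_lt (min_le_left _ _) (h1 ▸ u1.2)⟩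
      · exact hE e'.2 hu' ⟨lt_of_lt_of_le hlt (le_max_right _ _),
          lt_of_le_of_lt (min_le_left _ _) (h1 ▸ u2.1),
          lt_of_le_of_lt (min_le_left _ _) (h1 ▸ u2.2)⟩
  · simp only [Prod.mk.injEq] at heq; exact absurd heq.2 (by decide)
  · simp only [Prod.mk.injEq] at heq; exact absurd heq.2 (by decide)
  · simp only [Prod.mk.injEq] at heq; exact absurd heq.2 (by decide)
  · -- rule 1 / rule 1 : e.2 = e'.2
    simp only [Prod.mk.injEq] at heq
    have h2 : e.2 = e'.2 := heq.1
    have hne2 : e.1 ≠ e.2 := fun h => absurd (congrArg cA h) (ne_of_lt hA)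
    have hne2' : e'.1 ≠ e'.2 := fun h => absurd (congrArg cA h) (ne_of_lt hA')
    have hC : cC e.2 < cC e.1 := by
      rcases lt_or_gt_of_ne (genpos_ne hQ hl hu hne2).2.2 with h | h
      · exact absurd ⟨u4, h⟩ u1
      · exact h
    have hC' : cC e'.2 < cC e'.1 := by
      rcases lt_or_gt_of_ne (genpos_ne hQ hl' hu' hne2').2.2 with h | h
      · exact absurd ⟨u6, h⟩ u5
      · exact h
    by_cases h1 : e.1 = e'.1
    · exact Prod.ext h1 h2
    · exfalso
      rcases lt_or_gt_of_ne (genpos_ne hQ hl hl' h1).2.1 with hlt | hlt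
      · exact hE e'.1 hl' ⟨lt_of_lt_of_le (h2 ▸ hA') (le_max_right _ _),
          lt_of_le_of_lt (min_le_left _ _) hlt,
          lt_of_le_of_lt (min_le_right _ _) (h2 ▸ hC')⟩
      · exact hE' e.1 hl ⟨lt_of_lt_of_le (h2 ▸ hA) (le_max_right _ _),
          lt_of_le_of_lt (min_le_left _ _) hlt,
          lt_of_le_of_lt (min_le_right _ _) (h2 ▸ hC)⟩
  · simp only [Prod.mk.injEq] at heq; exact absurd heq.2 (by decide)
  · simp only [Prod.mk.injEq] at heq; exact absurd heq.2 (by decide)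
  · simp only [Prod.mk.injEq] at heq; exact absurd heq.2 (by decide)
  · -- rule 2 / rule 2 : e.2 = e'.2
    simp only [Prod.mk.injEq] at heq
    have h2 : e.2 = e'.2 := heq.1
    have hne2 : e.1 ≠ e.2 := fun h => absurd (congrArg cA h) (ne_of_lt hA)
    have hne2' : e'.1 ≠ e'.2 := fun h => absurd (congrArg cA h) (ne_of_lt hA')
    have hB : cB e.2 < cB e.1 := lt_of_not_ge (fun h => u4 (lt_of_le_of_ne h
      (genpos_ne hQ hl hu hne2).2.1))
    have hB' : cB e'.2 < cB e'.1 := lt_of_not_ge (fun h => u8 (lt_of_le_of_ne h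
      (genpos_ne hQ hl' hu' hne2').2.1))
    by_cases h1 : e.1 = e'.1
    · exact Prod.ext h1 h2
    · exfalso
      rcases lt_or_gt_of_ne (genpos_ne hQ hl hl' h1).2.2 with hlt | hlt
      · exact hE e'.1 hl' ⟨lt_of_lt_of_le (h2 ▸ hA') (le_max_right _ _),
          lt_of_le_of_lt (min_le_right _ _) (h2 ▸ hB'),
          lt_of_le_of_lt (min_le_left _ _) hlt⟩
      · exact hE' e.1 hl ⟨lt_of_lt_of_le (h2 ▸ hA) (le_max_right _ _),
          lt_of_le_of_lt (min_le_right _ _) (h2 ▸ hB),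
          lt_of_le_of_lt (min_le_left _ _) hlt⟩

lemma EmptyUp_symm {Q : Finset Pt} {p q : Pt} (h : EmptyUp Q p q) : EmptyUp Q q p := by
  intro r hr
  have hc : upTriInt q p = upTriInt p q := by
    ext x
    simp only [upTriInt, Set.mem_setOf_eq]
    rw [min_comm (cA q) (cA p), max_comm (cB q) (cB p), max_comm (cC q) (cC p)]
  rw [hc]; exact h r hr

lemma EmptyDown_symm {Q : Finset Pt} {p q : Pt} (h : EmptyDown Q p q) : EmptyDown Q q p := by
  intro r hr
  have hc : downTriInt q p = downTriInt p q := by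
    ext x
    simp only [downTriInt, Set.mem_setOf_eq]
    rw [max_comm (cA q) (cA p), min_comm (cB q) (cB p), min_comm (cC q) (cC p)]
  rw [hc]; exact h r hr

/-- The doubly-empty-edge graph. -/
def Hgraph (Q : Finset Pt) : SimpleGraph {x // x ∈ Q} where
  Adj x y := x ≠ y ∧ EmptyUp Q x.1 y.1 ∧ EmptyDown Q x.1 y.1
  symm := by
    constructor
    rintro x y ⟨h, h1, h2⟩
    exact ⟨h.symm, EmptyUp_symm h1, EmptyDown_symm h2⟩
  loopless := ⟨fun x h => h.1 rfl⟩

lemma H_reach (Q : Finset Pt) : ∀ x y : {z // z ∈ Q}, (Hgraph Q).Reachable x y := by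
  have main : ∀ n : ℕ, ∀ x y : {z // z ∈ Q},
      ((Q ×ˢ Q).filter (fun e => hdist e.1 e.2 < hdist x.1 y.1)).card ≤ n →
      (Hgraph Q).Reachable x y := by
    intro n
    induction n using Nat.strong_induction_on with
    | _ n ih =>
      intro x y hm
      by_cases hxy : x = y
      · exact hxy ▸ SimpleGraph.Reachable.refl x
      by_cases hadj : EmptyUp Q x.1 y.1 ∧ EmptyDown Q x.1 y.1
      · exact SimpleGraph.Adj.reachable ⟨hxy, hadj.1, hadj.2⟩
      · have hex : ∃ r ∈ Q, r ∈ upTriInt x.1 y.1 ∨ r ∈ downTriInt x.1 y.1 := by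
          by_contra hno
          push_neg at hno
          exact hadj ⟨fun r hr hmem => (hno r hr).1 hmem, fun r hr hmem => (hno r hr).2 hmem⟩
        obtain ⟨r, hrQ, hr⟩ := hex
        have hlt : hdist x.1 r < hdist x.1 y.1 ∧ hdist y.1 r < hdist x.1 y.1 :=
          hr.elim hdist_lt_of_mem_upTriInt hdist_lt_of_mem_downTriInt
        set r' : {z // z ∈ Q} := ⟨r, hrQ⟩
        have key : ∀ w : {z // z ∈ Q}, hdist w.1 r < hdist x.1 y.1 →
            ((Q ×ˢ Q).filter (fun e => hdist e.1 e.2 < hdist w.1 r')).card <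
            ((Q ×ˢ Q).filter (fun e => hdist e.1 e.2 < hdist x.1 y.1)).card := by
          intro w hw
          apply Finset.card_lt_card
          constructor
          · intro a ha
            simp only [Finset.mem_filter] at ha ⊢
            exact ⟨ha.1, lt_trans ha.2 hw⟩
          · intro hsub
            have hmem : (w.1, r) ∈ (Q ×ˢ Q).filter
                (fun e => hdist e.1 e.2 < hdist x.1 y.1) := by
              simp only [Finset.mem_filter, Finset.mem_product]
              exact ⟨⟨w.2, hrQ⟩, hw⟩
            have := hsub hmem
            simp only [Finset.mem_filter] at this
            exact lt_irrefl _ this.2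
        have m1 := key x hlt.1
        have m2 := key y hlt.2
        have r1 : (Hgraph Q).Reachable x r' :=
          ih _ (lt_of_lt_of_le m1 hm) x r' (le_refl _)
        have r2 : (Hgraph Q).Reachable y r' :=
          ih _ (lt_of_lt_of_le m2 hm) y r' (le_refl _)
        exact r1.trans r2.symm
  intro x y
  exact main _ x y (le_refl _)

lemma OV_card_lower {Q : Finset Pt} (hQ : GenPos Q) (hne : Q.Nonempty) :
    Q.card ≤ (UpE Q ∩ DnE Q).card + 1 := by
  classical
  obtain ⟨r0v, hr0⟩ := hne
  set r0 : {z // z ∈ Q} := ⟨r0v, hr0⟩ with hr0def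
  have hpar : ∀ v : {z // z ∈ Q}, v ≠ r0 → ∃ u : {z // z ∈ Q},
      (Hgraph Q).Adj v u ∧ (Hgraph Q).dist u r0 < (Hgraph Q).dist v r0 := by
    intro v hv
    have hreach := H_reach Q v r0
    have hd : 0 < (Hgraph Q).dist v r0 := hreach.pos_dist_of_ne hv
    obtain ⟨p, hp⟩ := hreach.exists_walk_length_eq_dist
    have hnil : ¬ p.Nil := by
      rw [SimpleGraph.Walk.not_nil_iff_lt_length]; omega
    refine ⟨p.snd, SimpleGraph.Walk.adj_snd hnil, ?_⟩
    have h1 := SimpleGraph.dist_le p.tail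
    have hlen := SimpleGraph.Walk.length_tail_add_one hnil
    omega
  choose par hadj hdst using hpar
  set f : {z // z ∈ Q} → Pt × Pt := fun v =>
    if h : v = r0 then ((0, 0), (0, 0))
    else if cA (par v h).1 < cA v.1 then ((par v h).1, v.1) else (v.1, (par v h).1) with hf
  have hcard := Finset.card_le_card_of_injOn f (s := Q.attach.erase r0)
    (t := UpE Q ∩ DnE Q) ?_ ?_
  · have : (Q.attach.erase r0).card = Q.card - 1 := by
      rw [Finset.card_erase_of_mem (Finset.mem_attach _ _), Finset.card_attach]
    rw [this] at hcard
    have : 0 < Q.card := Finset.card_pos.mpr ⟨r0v, hr0⟩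
    omega
  · -- maps to
    intro v hv
    have hvne : v ≠ r0 := (Finset.mem_erase.mp hv).1
    set u := par v hvne with hu
    obtain ⟨hne', hup, hdn⟩ := hadj v hvne
    have hvune : v.1 ≠ u.1 := fun h => hne' (Subtype.ext h)
    have hAne : cA v.1 ≠ cA u.1 := (genpos_ne hQ v.2 u.2 hvune).1
    simp only [hf, dif_neg hvne]
    split_ifs with hlt
    · simp only [Finset.mem_coe, Finset.mem_inter, UpE, DnE, Finset.mem_filter, Finset.mem_product]
      exact ⟨⟨⟨u.2, v.2⟩, hlt, EmptyUp_symm hup⟩, ⟨⟨u.2, v.2⟩, hlt, EmptyDown_symm hdn⟩⟩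
    · have hlt' : cA v.1 < cA u.1 := lt_of_le_of_ne (le_of_not_gt hlt) hAne
      simp only [Finset.mem_coe, Finset.mem_inter, UpE, DnE, Finset.mem_filter, Finset.mem_product]
      exact ⟨⟨⟨v.2, u.2⟩, hlt', hup⟩, ⟨⟨v.2, u.2⟩, hlt', hdn⟩⟩
  · -- injective
    intro v hv w hw heq
    have hvne : v ≠ r0 := (Finset.mem_erase.mp (Finset.mem_coe.mp hv)).1
    have hwne : w ≠ r0 := (Finset.mem_erase.mp (Finset.mem_coe.mp hw)).1
    simp only [hf, dif_neg hvne, dif_neg hwne] at heq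
    split_ifs at heq with h1 h2 h2
    · exact Subtype.ext (congrArg Prod.snd heq)
    · exfalso
      have e1 : (par v hvne).1 = w.1 := congrArg Prod.fst heq
      have e2 : v.1 = (par w hwne).1 := congrArg Prod.snd heq
      have e1' : par v hvne = w := Subtype.ext e1
      have e2' : par w hwne = v := Subtype.ext e2.symm
      have d1 := hdst v hvne
      have d2 := hdst w hwne
      rw [e1'] at d1; rw [e2'] at d2
      omega
    · exfalso
      have e1 : v.1 = (par w hwne).1 := congrArg Prod.fst heq
      have e2 : (par v hvne).1 = w.1 := congrArg Prod.snd heq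
      have e1' : par w hwne = v := Subtype.ext e1.symm
      have e2' : par v hvne = w := Subtype.ext e2
      have d1 := hdst v hvne
      have d2 := hdst w hwne
      rw [e2'] at d1; rw [e1'] at d2
      omega
    · exact Subtype.ext (congrArg Prod.fst heq)

lemma card_UpE_add_DnE {Q : Finset Pt} (hQ : GenPos Q) (hne : Q.Nonempty) :
    (UpE Q).card + (DnE Q).card + 3 ≤ 6 * Q.card := by
  classical
  obtain ⟨t, htQ, htmax⟩ := Q.exists_max_image cA hne
  set T1 := ((Q ×ˢ (Finset.univ : Finset (Fin 3))).erase (t, 1)).erase (t, 2) with hT1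
  set T2 := (Q ×ˢ (Finset.univ : Finset (Fin 3))).erase (t, 0) with hT2
  have hprodcard : (Q ×ˢ (Finset.univ : Finset (Fin 3))).card = Q.card * 3 := by
    rw [Finset.card_product, Finset.card_univ, Fintype.card_fin]
  have hmem1 : ((t, (1 : Fin 3)) : Pt × Fin 3) ∈ Q ×ˢ (Finset.univ : Finset (Fin 3)) :=
    Finset.mem_product.mpr ⟨htQ, Finset.mem_univ _⟩
  have hmem2 : ((t, (2 : Fin 3)) : Pt × Fin 3) ∈
      (Q ×ˢ (Finset.univ : Finset (Fin 3))).erase (t, 1) :=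
    Finset.mem_erase.mpr ⟨fun h => by have h2 := congrArg Prod.snd h; simp only at h2; exact absurd h2 (by decide),
      Finset.mem_product.mpr ⟨htQ, Finset.mem_univ _⟩⟩
  have hmem0 : ((t, (0 : Fin 3)) : Pt × Fin 3) ∈ Q ×ˢ (Finset.univ : Finset (Fin 3)) :=
    Finset.mem_product.mpr ⟨htQ, Finset.mem_univ _⟩
  have hT1card : T1.card + 2 = 3 * Q.card := by
    rw [hT1, Finset.card_erase_of_mem hmem2, Finset.card_erase_of_mem hmem1, hprodcard]
    have : 0 < Q.card := Finset.card_pos.mpr hne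
    omega
  have hT2card : T2.card + 1 = 3 * Q.card := by
    rw [hT2, Finset.card_erase_of_mem hmem0, hprodcard]
    have : 0 < Q.card := Finset.card_pos.mpr hne
    omega
  have hup : (UpE Q).card ≤ T1.card := by
    apply Finset.card_le_card_of_injOn chUp _ (chUp_injOn hQ)
    intro e he
    obtain ⟨hl, hu, hA, hE⟩ := mem_UpE he
    have hAt2 : cA e.2 ≤ cA t := htmax e.2 hu
    unfold chUp
    split_ifs with c1 c2
    · exact Finset.mem_erase.mpr ⟨fun h => by have h2 := congrArg Prod.snd h; simp only at h2; exact absurd h2 (by decide),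
        Finset.mem_erase.mpr ⟨fun h => by have h2 := congrArg Prod.snd h; simp only at h2; exact absurd h2 (by decide),
          Finset.mem_product.mpr ⟨hu, Finset.mem_univ _⟩⟩⟩
    · refine Finset.mem_erase.mpr ⟨fun h => by have h2 := congrArg Prod.snd h; simp only at h2; exact absurd h2 (by decide),
        Finset.mem_erase.mpr ⟨fun h => ?_, Finset.mem_product.mpr ⟨hl, Finset.mem_univ _⟩⟩⟩
      have h2 := congrArg Prod.fst h
      simp only at h2
      rw [h2] at hA; linarith
    · refine Finset.mem_erase.mpr ⟨fun h => ?_,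
        Finset.mem_erase.mpr ⟨fun h => by have h2 := congrArg Prod.snd h; simp only at h2; exact absurd h2 (by decide),
          Finset.mem_product.mpr ⟨hl, Finset.mem_univ _⟩⟩⟩
      have h2 := congrArg Prod.fst h
      simp only at h2
      rw [h2] at hA; linarith
  have hdn : (DnE Q).card ≤ T2.card := by
    apply Finset.card_le_card_of_injOn chDn _ (chDn_injOn hQ)
    intro e he
    obtain ⟨hl, hu, hA, hE⟩ := mem_DnE he
    have hAt2 : cA e.2 ≤ cA t := htmax e.2 hu
    unfold chDn
    split_ifs with c1 c2
    · refine Finset.mem_erase.mpr ⟨fun h => ?_,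
        Finset.mem_product.mpr ⟨hl, Finset.mem_univ _⟩⟩
      have h2 := congrArg Prod.fst h
      simp only at h2
      rw [h2] at hA; linarith
    · exact Finset.mem_erase.mpr ⟨fun h => by have h2 := congrArg Prod.snd h; simp only at h2; exact absurd h2 (by decide),
        Finset.mem_product.mpr ⟨hu, Finset.mem_univ _⟩⟩
    · exact Finset.mem_erase.mpr ⟨fun h => by have h2 := congrArg Prod.snd h; simp only at h2; exact absurd h2 (by decide),
        Finset.mem_product.mpr ⟨hu, Finset.mem_univ _⟩⟩
  omega

def Adjpt (Q : Finset Pt) (p q : Pt) : Prop :=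
  p ≠ q ∧ (EmptyUp Q p q ∨ EmptyDown Q p q)

lemma Adjpt_symm {Q : Finset Pt} {p q : Pt} (h : Adjpt Q p q) : Adjpt Q q p :=
  ⟨h.1.symm, h.2.elim (fun h' => Or.inl (EmptyUp_symm h')) (fun h' => Or.inr (EmptyDown_symm h'))⟩

lemma exists_low_degree {Q : Finset Pt} (hQ : GenPos Q) (hne : Q.Nonempty) :
    ∃ v ∈ Q, (Q.filter (fun q => Adjpt Q v q)).card ≤ 9 := by
  classical
  by_contra hcon
  push_neg at hcon
  set L := (Q ×ˢ Q).filter (fun e => Adjpt Q e.1 e.2) with hL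
  -- L.card = sum of degrees
  have hL1 : L.card = ∑ v ∈ Q, (Q.filter (fun q => Adjpt Q v q)).card := by
    rw [hL, Finset.card_eq_sum_card_fiberwise (f := fun e => e.1) (t := Q)
      (fun e he => (Finset.mem_product.mp (Finset.mem_filter.mp he).1).1)]
    apply Finset.sum_congr rfl
    intro v hv
    apply Finset.card_bij (fun e _ => e.2)
    · intro e he
      simp only [Finset.mem_filter, Finset.mem_product] at he
      rcases he with ⟨⟨⟨h1, h2⟩, h3⟩, h4⟩
      subst h4
      exact Finset.mem_filter.mpr ⟨h2, h3⟩
    · intro e he e' he' heq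
      simp only [Finset.mem_filter, Finset.mem_product] at he he'
      exact Prod.ext (he.2.trans he'.2.symm) heq
    · intro b hb
      simp only [Finset.mem_filter] at hb
      refine ⟨(v, b), ?_, rfl⟩
      simp only [Finset.mem_filter, Finset.mem_product]
      exact ⟨⟨⟨hv, hb.1⟩, hb.2⟩, trivial⟩
  have hdeg : ∀ v ∈ Q, 10 ≤ (Q.filter (fun q => Adjpt Q v q)).card := by
    intro v hv; exact hcon v hv
  have hlow : 10 * Q.card ≤ L.card := by
    rw [hL1]
    calc 10 * Q.card = ∑ _v ∈ Q, 10 := by rw [Finset.sum_const, smul_eq_mul, mul_comm]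
    _ ≤ _ := Finset.sum_le_sum hdeg
  -- split L by height
  have hsplit := Finset.card_filter_add_card_filter_not
    (s := L) (p := fun e => cA e.1 < cA e.2)
  -- the low part equals UpE ∪ DnE
  have hlo : L.filter (fun e => cA e.1 < cA e.2) = UpE Q ∪ DnE Q := by
    ext e
    simp only [hL, Finset.mem_filter, Finset.mem_union, UpE, DnE, Finset.mem_product]
    constructor
    · rintro ⟨⟨⟨h1, h2⟩, _, h4⟩, h5⟩
      rcases h4 with h4 | h4
      · exact Or.inl ⟨⟨h1, h2⟩, h5, h4⟩
      · exact Or.inr ⟨⟨h1, h2⟩, h5, h4⟩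
    · rintro (⟨⟨h1, h2⟩, h5, h4⟩ | ⟨⟨h1, h2⟩, h5, h4⟩)
      · exact ⟨⟨⟨h1, h2⟩, fun hh => absurd (congrArg cA hh) (ne_of_lt h5), Or.inl h4⟩, h5⟩
      · exact ⟨⟨⟨h1, h2⟩, fun hh => absurd (congrArg cA hh) (ne_of_lt h5), Or.inr h4⟩, h5⟩
  -- the high part has the same cardinality as the low part (swap)
  have hhi : (L.filter (fun e => ¬ cA e.1 < cA e.2)).card =
      (L.filter (fun e => cA e.1 < cA e.2)).card := by
    apply Finset.card_bij (fun e _ => (e.2, e.1))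
    · intro e he
      simp only [hL, Finset.mem_filter, Finset.mem_product] at he ⊢
      rcases he with ⟨⟨⟨h1, h2⟩, h3⟩, h4⟩
      have hAne : cA e.1 ≠ cA e.2 := (genpos_ne hQ h1 h2 h3.1).1
      exact ⟨⟨⟨h2, h1⟩, Adjpt_symm h3⟩, lt_of_le_of_ne (le_of_not_gt h4) hAne.symm⟩
    · intro e he e' he' heq
      exact Prod.ext (congrArg Prod.snd heq) (congrArg Prod.fst heq)
    · intro b hb
      simp only [hL, Finset.mem_filter, Finset.mem_product] at hb
      rcases hb with ⟨⟨⟨h1, h2⟩, h3⟩, h4⟩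
      refine ⟨(b.2, b.1), ?_, rfl⟩
      simp only [hL, Finset.mem_filter, Finset.mem_product]
      exact ⟨⟨⟨h2, h1⟩, Adjpt_symm h3⟩, not_lt.mpr (le_of_lt h4)⟩
  -- counting
  have hcount := card_UpE_add_DnE hQ hne
  have hov := OV_card_lower hQ hne
  have huni := Finset.card_union_add_card_inter (UpE Q) (DnE Q)
  have hlo_card : (L.filter (fun e => cA e.1 < cA e.2)).card = (UpE Q ∪ DnE Q).card := by
    rw [hlo]
  have hQpos : 0 < Q.card := Finset.card_pos.mpr hne
  omega

lemma Adjpt_mono {Q' Q : Finset Pt} (hsub : Q' ⊆ Q) {p q : Pt} (h : Adjpt Q p q) :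
    Adjpt Q' p q :=
  ⟨h.1, h.2.elim (fun h' => Or.inl (fun r hr => h' r (hsub hr)))
    (fun h' => Or.inr (fun r hr => h' r (hsub hr)))⟩

lemma exists_coloring : ∀ n (Q : Finset Pt), Q.card = n → GenPos Q →
    ∃ col : Pt → Fin 10, ∀ p ∈ Q, ∀ q ∈ Q, Adjpt Q p q → col p ≠ col q := by
  intro n
  induction n using Nat.strong_induction_on with
  | _ n ih =>
    intro Q hcard hQ
    rcases Q.eq_empty_or_nonempty with he | hne
    · exact ⟨fun _ => 0, by simp [he]⟩
    · obtain ⟨v, hv, hdeg⟩ := exists_low_degree hQ hne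
      set Q' := Q.erase v with hQ'def
      have hsub : Q' ⊆ Q := Finset.erase_subset _ _
      have hQ'gp : GenPos Q' := fun p hp q hq hpq =>
        hQ p (hsub hp) q (hsub hq) hpq
      have hcard' : Q'.card < n := by
        rw [← hcard]; exact Finset.card_erase_lt_of_mem hv
      obtain ⟨col', hcol'⟩ := ih Q'.card hcard' Q' rfl hQ'gp
      set S := (Q.filter (fun q => Adjpt Q v q)).image col' with hS
      have hScard : S.card < 10 :=
        lt_of_le_of_lt (le_trans Finset.card_image_le hdeg) (by norm_num)
      have hex : ∃ c : Fin 10, c ∉ S := by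
        by_contra h
        push_neg at h
        have hsub2 : (Finset.univ : Finset (Fin 10)) ⊆ S := fun c _ => h c
        have := Finset.card_le_card hsub2
        simp only [Finset.card_univ, Fintype.card_fin] at this
        omega
      obtain ⟨c0, hc0⟩ := hex
      refine ⟨fun p => if p = v then c0 else col' p, ?_⟩
      intro p hp q hq hadj
      show (if p = v then c0 else col' p) ≠ (if q = v then c0 else col' q)
      by_cases hpv : p = v <;> by_cases hqv : q = v
      · exact absurd (hpv.trans hqv.symm) hadj.1
      · subst hpv
        rw [if_neg hqv, if_pos rfl]
        intro heq
        apply hc0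
        rw [heq]
        exact Finset.mem_image_of_mem col' (Finset.mem_filter.mpr ⟨hq, hadj⟩)
      · subst hqv
        rw [if_neg hpv, if_pos rfl]
        intro heq
        apply hc0
        rw [← heq]
        exact Finset.mem_image_of_mem col' (Finset.mem_filter.mpr ⟨hp, Adjpt_symm hadj⟩)
      · simp only [if_neg hpv, if_neg hqv]
        exact hcol' p (Finset.mem_erase.mpr ⟨hpv, hp⟩) q (Finset.mem_erase.mpr ⟨hqv, hq⟩)
          (Adjpt_mono hsub hadj)

/-- Every Θ₆-graph on `n` points in general position is 10-colorable and contains an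
independent set of size at least `n/10`. -/
theorem theta6_colorable_and_indep (P : Finset Pt) (hP : GenPos P) :
    (theta6 P).Colorable 10 ∧
    ∃ I : Finset {x // x ∈ P},
      (∀ v ∈ I, ∀ w ∈ I, ¬ (theta6 P).Adj v w) ∧
      (P.card : ℝ) / 10 ≤ (I.card : ℝ) := by
  classical
  obtain ⟨col, hcol⟩ := exists_coloring P.card P rfl hP
  have hvalid : ∀ {a b : {x // x ∈ P}}, (theta6 P).Adj a b → col a.1 ≠ col b.1 := by
    intro a b hab
    obtain ⟨hne, hor⟩ := hab
    exact hcol a.1 a.2 b.1 b.2 ⟨fun h => hne (Subtype.ext h), hor⟩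
  constructor
  · exact ⟨SimpleGraph.Coloring.mk (fun v => col v.1) hvalid⟩
  · obtain ⟨c, _, hc⟩ := Finset.exists_max_image (Finset.univ : Finset (Fin 10))
      (fun d => (Finset.univ.filter (fun v : {x // x ∈ P} => col v.1 = d)).card)
      ⟨0, Finset.mem_univ _⟩
    refine ⟨Finset.univ.filter (fun v => col v.1 = c), ?_, ?_⟩
    · intro v hv w hw hadj
      have h1 := (Finset.mem_filter.mp hv).2
      have h2 := (Finset.mem_filter.mp hw).2
      exact hvalid hadj (h1.trans h2.symm)
    · have hsum : (Finset.univ : Finset {x // x ∈ P}).card =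
          ∑ d ∈ (Finset.univ : Finset (Fin 10)),
            (Finset.univ.filter (fun v : {x // x ∈ P} => col v.1 = d)).card :=
        Finset.card_eq_sum_card_fiberwise (fun v _ => Finset.mem_univ _)
      have hbound : (Finset.univ : Finset {x // x ∈ P}).card ≤
          10 * (Finset.univ.filter (fun v : {x // x ∈ P} => col v.1 = c)).card := by
        rw [hsum]
        calc ∑ d ∈ (Finset.univ : Finset (Fin 10)),
              (Finset.univ.filter (fun v : {x // x ∈ P} => col v.1 = d)).card
            ≤ ∑ _d ∈ (Finset.univ : Finset (Fin 10)),
              (Finset.univ.filter (fun v : {x // x ∈ P} => col v.1 = c)).card :=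
              Finset.sum_le_sum (fun d _ => hc d (Finset.mem_univ _))
          _ = 10 * _ := by
              rw [Finset.sum_const, Finset.card_univ, Fintype.card_fin, smul_eq_mul]
      have hPcard : (Finset.univ : Finset {x // x ∈ P}).card = P.card := by
        rw [Finset.card_univ, Fintype.card_coe]
      rw [hPcard] at hbound
      rw [div_le_iff₀ (by norm_num : (0:ℝ) < 10)]
      have hcast : (P.card : ℝ) ≤ 10 *
          ((Finset.univ.filter (fun v : {x // x ∈ P} => col v.1 = c)).card : ℝ) := by
        exact_mod_cast hbound
      linarith
end
end

section
/- There exists a set P of at least 11 points in the plane in general position such that every vertex of the Θ6-graph G⋆(P) has degree at least 7 (i.e., there are Θ6-graphs with minimum vertex degree 7). -/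
noncomputable section

/-! ### Auxiliary construction: integer points embedded so that cone
coordinates become integers. -/

def emb (z : ℤ × ℤ) : Pt := ((z.1 : ℝ) * (Real.sqrt 3 / 3), (z.2 : ℝ))

lemma sqrt3_sq : Real.sqrt 3 * Real.sqrt 3 = 3 := Real.mul_self_sqrt (by norm_num)

abbrev zA (z : ℤ × ℤ) : ℤ := z.2
abbrev zB (z : ℤ × ℤ) : ℤ := z.1 + z.2
abbrev zC (z : ℤ × ℤ) : ℤ := z.2 - z.1

lemma cA_emb (z : ℤ × ℤ) : cA (emb z) = ((zA z : ℤ) : ℝ) := rfl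

lemma cB_emb (z : ℤ × ℤ) : cB (emb z) = ((zB z : ℤ) : ℝ) := by
  unfold cB emb zB
  push_cast
  linear_combination ((z.1 : ℝ) / 3) * sqrt3_sq

lemma cC_emb (z : ℤ × ℤ) : cC (emb z) = ((zC z : ℤ) : ℝ) := by
  unfold cC emb zC
  push_cast
  linear_combination (-(z.1 : ℝ) / 3) * sqrt3_sq

lemma emb_inj : Function.Injective emb := by
  intro a b h
  have h1 : (a.1 : ℝ) * (Real.sqrt 3 / 3) = (b.1 : ℝ) * (Real.sqrt 3 / 3) :=
    congrArg Prod.fst h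
  have h2 : (a.2 : ℝ) = (b.2 : ℝ) := congrArg Prod.snd h
  have hs : Real.sqrt 3 / 3 ≠ 0 := by positivity
  have h1' : (a.1 : ℝ) = (b.1 : ℝ) := mul_right_cancel₀ hs h1
  exact Prod.ext (by exact_mod_cast h1') (by exact_mod_cast h2)

lemma slope_emb (a b : ℤ × ℤ) :
    Real.sqrt 3 * ((emb b).1 - (emb a).1) = ((b.1 - a.1 : ℤ) : ℝ) := by
  unfold emb
  push_cast
  linear_combination (((b.1 : ℝ) - (a.1 : ℝ)) / 3) * sqrt3_sq

abbrev zUp (p q r : ℤ × ℤ) : Prop :=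
  min (zA p) (zA q) < zA r ∧ zB r < max (zB p) (zB q) ∧ zC r < max (zC p) (zC q)
abbrev zDn (p q r : ℤ × ℤ) : Prop :=
  zA r < max (zA p) (zA q) ∧ min (zB p) (zB q) < zB r ∧ min (zC p) (zC q) < zC r

lemma mem_up_iff (p q r : ℤ × ℤ) : emb r ∈ upTriInt (emb p) (emb q) ↔ zUp p q r := by
  simp only [upTriInt, Set.mem_setOf_eq, cA_emb, cB_emb, cC_emb, zUp]
  norm_cast

lemma mem_dn_iff (p q r : ℤ × ℤ) : emb r ∈ downTriInt (emb p) (emb q) ↔ zDn p q r := by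
  simp only [downTriInt, Set.mem_setOf_eq, cA_emb, cB_emb, cC_emb, zDn]
  norm_cast

/-- A 14-point integer configuration whose Θ₆-graph has minimum degree 7. -/
def Lz : List (ℤ × ℤ) :=
  [(34, 2), (68, 46), (-62, -39), (-35, 79), (62, 75), (108, 38), (36, 29),
   (31, 40), (24, 31), (45, 21), (42, 45), (57, 49), (81, 52), (34, 22)]

abbrev zAdj (a b : ℤ × ℤ) : Prop :=
  a ≠ b ∧ ((∀ r ∈ Lz, ¬ zUp a b r) ∨ (∀ r ∈ Lz, ¬ zDn a b r))

lemma hNodup : Lz.Nodup := by decide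

lemma hGen : ∀ a ∈ Lz, ∀ b ∈ Lz, a ≠ b →
    a.2 ≠ b.2 ∧ b.2 - a.2 ≠ b.1 - a.1 ∧ b.2 - a.2 ≠ a.1 - b.1 := by decide

lemma hDeg : ∀ a ∈ Lz, 7 ≤ (Lz.filter (fun b => decide (zAdj a b))).length := by decide

/-- There is a set `P` of at least 11 points in general position whose Θ₆-graph has
minimum vertex degree at least 7. -/
theorem theta6_min_degree_seven :
    ∃ P : Finset Pt, GenPos P ∧ 11 ≤ P.card ∧
      ∀ v : {x // x ∈ P}, 7 ≤ ((theta6 P).neighborSet v).ncard := by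
  refine ⟨(Lz.map emb).toFinset, ?_, ?_, ?_⟩
  · -- general position
    intro p hp q hq hne
    rw [List.mem_toFinset, List.mem_map] at hp hq
    obtain ⟨a, ha, rfl⟩ := hp
    obtain ⟨b, hb, rfl⟩ := hq
    have hab : a ≠ b := fun h => hne (by rw [h])
    obtain ⟨h1, h2, h3⟩ := hGen a ha b hb hab
    refine ⟨?_, ?_, ?_⟩
    · intro h
      unfold emb at h
      simp only at h
      exact h1 (by exact_mod_cast h)
    · intro h
      apply h2
      have key : ((b.2 - a.2 : ℤ) : ℝ) = ((b.1 - a.1 : ℤ) : ℝ) := by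
        rw [← slope_emb a b, ← h]
        unfold emb
        push_cast
        ring
      exact_mod_cast key
    · intro h
      apply h3
      have key : ((b.2 - a.2 : ℤ) : ℝ) = ((a.1 - b.1 : ℤ) : ℝ) := by
        have hs := slope_emb a b
        unfold emb at h hs
        simp only at h hs
        push_cast at hs h ⊢
        linarith [h, hs]
      exact_mod_cast key
  · -- cardinality
    rw [List.toFinset_card_of_nodup (hNodup.map emb_inj), List.length_map]
    decide
  · -- minimum degree
    intro v
    obtain ⟨a, haL, hva⟩ : ∃ a ∈ Lz, emb a = v.1 := by
      have hv := v.2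
      simp only [List.mem_toFinset, List.mem_map] at hv
      exact hv
    have bridgeU : ∀ b ∈ Lz, (∀ r ∈ Lz, ¬ zUp a b r) →
        EmptyUp (Lz.map emb).toFinset (emb a) (emb b) := by
      intro b _ h r hr
      simp only [List.mem_toFinset, List.mem_map] at hr
      obtain ⟨z, hz, rfl⟩ := hr
      rw [mem_up_iff]
      exact h z hz
    have bridgeD : ∀ b ∈ Lz, (∀ r ∈ Lz, ¬ zDn a b r) →
        EmptyDown (Lz.map emb).toFinset (emb a) (emb b) := by
      intro b _ h r hr
      simp only [List.mem_toFinset, List.mem_map] at hr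
      obtain ⟨z, hz, rfl⟩ := hr
      rw [mem_dn_iff]
      exact h z hz
    have hFcard : 7 ≤ ((Lz.filter (fun b => decide (zAdj a b))).toFinset).card := by
      rw [List.toFinset_card_of_nodup (hNodup.filter _)]
      exact hDeg a haL
    have hGcard : (((Lz.filter (fun b => decide (zAdj a b))).toFinset).image emb).card
        = ((Lz.filter (fun b => decide (zAdj a b))).toFinset).card :=
      Finset.card_image_of_injective _ emb_inj
    have hsub : ↑(((Lz.filter (fun b => decide (zAdj a b))).toFinset).image emb)
        ⊆ Subtype.val '' ((theta6 (Lz.map emb).toFinset).neighborSet v) := by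
      intro x hx
      simp only [Finset.coe_image, Set.mem_image, Finset.mem_coe] at hx
      obtain ⟨b, hbF, rfl⟩ := hx
      rw [List.mem_toFinset, List.mem_filter] at hbF
      obtain ⟨hbL, hbA⟩ := hbF
      have hbA' : zAdj a b := of_decide_eq_true hbA
      have hbP : emb b ∈ (Lz.map emb).toFinset := by
        simp only [List.mem_toFinset, List.mem_map]
        exact ⟨b, hbL, rfl⟩
      refine ⟨⟨emb b, hbP⟩, ?_, rfl⟩
      show (theta6 (Lz.map emb).toFinset).Adj v ⟨emb b, hbP⟩
      refine ⟨?_, ?_⟩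
      · intro hvw
        have hv1 : v.1 = emb b := congrArg Subtype.val hvw
        exact hbA'.1 (emb_inj (hva.trans hv1))
      · rcases hbA'.2 with h | h
        · left
          show EmptyUp (Lz.map emb).toFinset v.1 (emb b)
          rw [← hva]
          exact bridgeU b hbL h
        · right
          show EmptyDown (Lz.map emb).toFinset v.1 (emb b)
          rw [← hva]
          exact bridgeD b hbL h
    calc (7 : ℕ) ≤ ((Lz.filter (fun b => decide (zAdj a b))).toFinset).card := hFcard
      _ = (((Lz.filter (fun b => decide (zAdj a b))).toFinset).image emb).card := hGcard.symm
      _ = (↑(((Lz.filter (fun b => decide (zAdj a b))).toFinset).image emb) : Set Pt).ncard :=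
          (Set.ncard_coe_finset _).symm
      _ ≤ (Subtype.val '' ((theta6 (Lz.map emb).toFinset).neighborSet v)).ncard :=
          Set.ncard_le_ncard hsub ((Set.toFinite _).image _)
      _ = ((theta6 (Lz.map emb).toFinset).neighborSet v).ncard :=
          Set.ncard_image_of_injective _ Subtype.val_injective
end
end
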